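/- arXiv:2002.11775 — 4 statements merged into one kernel-verified Lean document; each statement's English description precedes it below -/
import Mathlib

section
/- Given a fixed initial state x₀, for each i ∈ {2,…,T} there exists a finite set 𝒦_i of sequences (j₁,…,j_{i−1}) of non-negative integers and finite positive constants α_i^{(j₁,…,j_{i−1})}(x₀), depending on x₀ and the exponent sequence but not on the observations or the control, such that for every admissible control u ∈ U, every observation sequence (y₁,…,y_T), and every t ∈ [i−1, i], the hybrid mode x_i satisfies ‖x_i(t)‖₂ ≤ Σ_{(j₁,…,j_{i−1}) ∈ 𝒦_i} α_i^{(j₁,…,j_{i−1})}(x₀) ∏_{m=1}^{i−1} ‖y_m‖₂^{j_m}. For i = 1, there is a finite positive constant α₁(x₀) with ‖x₁(t)‖₂ ≤ α₁(x₀) for all t ∈ [0,1]. -/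
open Set MeasureTheory Filter Topology

noncomputable section

open scoped Classical

abbrev EucSp (n : ℕ) := EuclideanSpace ℝ (Fin n)

/-- A function is piecewise continuous on `s` if it is continuous within `s` outside of a
finite set of points. -/
def PiecewiseContinuousOn {E : Type*} [TopologicalSpace E] (u : ℝ → E) (s : Set ℝ) : Prop :=
  ∃ D : Finset ℝ, ∀ t ∈ s, t ∉ D → ContinuousWithinAt u s t

/-- Admissible controls: piecewise continuous functions on `[0, T]` with values in the
closed ball of radius `ρmax`. -/
def AdmissibleCtrl {m : ℕ} (T ρmax : ℝ) (u : ℝ → EucSp m) : Prop :=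
  PiecewiseContinuousOn u (Set.Icc 0 T) ∧ ∀ t ∈ Set.Icc (0 : ℝ) T, ‖u t‖ ≤ ρmax

/-- `x` is a (Carathéodory) solution of `ẋ = f(x, u(t))` on `[a, b]`, in integral form. -/
def IsSolOn {nx m : ℕ} (f : EucSp nx → EucSp m → EucSp nx) (u : ℝ → EucSp m)
    (a b : ℝ) (x : ℝ → EucSp nx) : Prop :=
  ContinuousOn x (Set.Icc a b) ∧
    ∀ t ∈ Set.Icc a b, x t = x a + ∫ s in a..t, f (x s) (u s)

/-- The modes `x i : [i-1, i] → ℝ^{n_x}` of the hybrid system with time-driven switching: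
`x 1 0 = x₀`, each mode solves `ẋ = f(x, u)` on `[i-1, i]`, and modes are linked by the jump
map `g` with observation `y i`. -/
def HybridModes {nx ny m : ℕ} (T : ℕ) (f : EucSp nx → EucSp m → EucSp nx)
    (g : EucSp nx → EucSp ny → EucSp nx) (u : ℝ → EucSp m) (y : ℕ → EucSp ny)
    (x₀ : EucSp nx) (x : ℕ → ℝ → EucSp nx) : Prop :=
  x 1 0 = x₀ ∧
    (∀ i : ℕ, 1 ≤ i → i ≤ T → IsSolOn f u ((i : ℝ) - 1) (i : ℝ) (x i)) ∧
    (∀ i : ℕ, 1 ≤ i → i + 1 ≤ T → x (i + 1) (i : ℝ) = g (x i (i : ℝ)) (y i))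

/-- The hybrid trajectory `X` built from the modes: `X t = x i t` on `[i-1, i)` and
`X T = g (x T T) (y T)`. -/
def IsHybridTraj {nx ny : ℕ} (T : ℕ) (g : EucSp nx → EucSp ny → EucSp nx)
    (y : ℕ → EucSp ny) (x : ℕ → ℝ → EucSp nx) (X : ℝ → EucSp nx) : Prop :=
  (∀ i : ℕ, 1 ≤ i → i ≤ T → ∀ t ∈ Set.Ico ((i : ℝ) - 1) (i : ℝ), X t = x i t) ∧
    X (T : ℝ) = g (x T (T : ℝ)) (y T)

/-- The perturbed control: equal to `v` on `(τ - ε, τ]` and to `u` elsewhere. -/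
def perturb {m : ℕ} (u : ℝ → EucSp m) (τ : ℝ) (v : EucSp m) (ε : ℝ) : ℝ → EucSp m :=
  fun t => if τ - ε < t ∧ t ≤ τ then v else u t

namespace BST

/-- evaluation of a "polynomial list" at nonneg values `y` with variables `1..r`. -/
def eval (y : ℕ → ℝ) (r : ℕ) (K : List ((ℕ → ℕ) × ℝ)) : ℝ :=
  (K.map fun p => p.2 * ∏ mm ∈ Finset.Icc 1 r, (y mm) ^ p.1 mm).sum

def Kmul (K K' : List ((ℕ → ℕ) × ℝ)) : List ((ℕ → ℕ) × ℝ) :=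
  K.flatMap fun p => K'.map fun q => (fun mm => p.1 mm + q.1 mm, p.2 * q.2)

def Kpow (K : List ((ℕ → ℕ) × ℝ)) : ℕ → List ((ℕ → ℕ) × ℝ)
  | 0 => [(fun _ => 0, 1)]
  | L + 1 => Kmul K (Kpow K L)

lemma eval_nil (y r) : eval y r [] = 0 := rfl

lemma eval_cons (y : ℕ → ℝ) (r : ℕ) (p : (ℕ → ℕ) × ℝ) (K) :
    eval y r (p :: K) = p.2 * ∏ mm ∈ Finset.Icc 1 r, (y mm) ^ p.1 mm + eval y r K := by
  simp [eval]

lemma eval_append (y r K K') : eval y r (K ++ K') = eval y r K + eval y r K' := by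
  simp [eval]

lemma eval_map_single (y : ℕ → ℝ) (r : ℕ) (p : (ℕ → ℕ) × ℝ) (K' : List ((ℕ → ℕ) × ℝ)) :
    eval y r (K'.map fun q => (fun mm => p.1 mm + q.1 mm, p.2 * q.2))
      = (p.2 * ∏ mm ∈ Finset.Icc 1 r, (y mm) ^ p.1 mm) * eval y r K' := by
  induction K' with
  | nil => simp [eval]
  | cons q K' ih =>
      rw [List.map_cons, eval_cons, eval_cons, ih]
      simp only [pow_add, Finset.prod_mul_distrib]
      ring

lemma eval_Kmul (y r K K') : eval y r (Kmul K K') = eval y r K * eval y r K' := by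
  induction K with
  | nil => simp [eval, Kmul]
  | cons p K ih =>
      rw [Kmul, List.flatMap_cons, eval_append, eval_map_single, ← Kmul, ih, eval_cons]
      ring

lemma eval_Kpow (y r K) (L : ℕ) : eval y r (Kpow K L) = (eval y r K) ^ L := by
  induction L with
  | zero => simp [Kpow, eval]
  | succ L ih => rw [Kpow, eval_Kmul, ih, pow_succ]; ring

lemma Kmul_pos {K K' : List ((ℕ → ℕ) × ℝ)} (h : ∀ p ∈ K, 0 < p.2) (h' : ∀ p ∈ K', 0 < p.2) :
    ∀ p ∈ Kmul K K', 0 < p.2 := by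
  intro p hp
  simp only [Kmul, List.mem_flatMap, List.mem_map] at hp
  obtain ⟨a, ha, q, hq, rfl⟩ := hp
  exact mul_pos (h a ha) (h' q hq)

lemma Kpow_pos {K : List ((ℕ → ℕ) × ℝ)} (h : ∀ p ∈ K, 0 < p.2) (L : ℕ) :
    ∀ p ∈ Kpow K L, 0 < p.2 := by
  induction L with
  | zero => intro p hp; simp [Kpow] at hp; simp [hp]
  | succ L ih => exact Kmul_pos h ih

/-- the exponents vanish above `r`. -/
def Vanish (r : ℕ) (K : List ((ℕ → ℕ) × ℝ)) : Prop :=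
  ∀ p ∈ K, ∀ mm, r < mm → p.1 mm = 0

lemma Vanish_Kmul {r K K'} (h : Vanish r K) (h' : Vanish r K') : Vanish r (Kmul K K') := by
  intro p hp mm hmm
  simp only [Kmul, List.mem_flatMap, List.mem_map] at hp
  obtain ⟨a, ha, q, hq, rfl⟩ := hp
  simp [h a ha mm hmm, h' q hq mm hmm]

lemma Vanish_Kpow {r K} (h : Vanish r K) (L : ℕ) : Vanish r (Kpow K L) := by
  induction L with
  | zero => intro p hp mm hmm; simp [Kpow] at hp; simp [hp]
  | succ L ih => exact Vanish_Kmul h ih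

lemma eval_extend (y : ℕ → ℝ) {r r' : ℕ} (h : r ≤ r') {K} (hK : Vanish r K) :
    eval y r' K = eval y r K := by
  unfold eval
  congr 1
  apply List.map_congr_left
  intro p hp
  congr 1
  refine (Finset.prod_subset (Finset.Icc_subset_Icc_right h) ?_).symm
  intro mm hmm hnot
  have : r < mm := by
    simp only [Finset.mem_Icc] at hmm hnot
    omega
  rw [hK p hp mm this, pow_zero]

lemma eval_nonneg (y : ℕ → ℝ) (hy : ∀ mm, 0 ≤ y mm) (r : ℕ) {K}
    (hK : ∀ p ∈ K, 0 < p.2) : 0 ≤ eval y r K := by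
  induction K with
  | nil => simp [eval]
  | cons p K ih =>
      rw [eval_cons]
      have h1 : 0 ≤ ∏ mm ∈ Finset.Icc 1 r, (y mm) ^ p.1 mm :=
        Finset.prod_nonneg fun mm _ => pow_nonneg (hy mm) _
      have := ih (fun q hq => hK q (List.mem_cons_of_mem _ hq))
      nlinarith [(hK p List.mem_cons_self).le]


lemma solBound {nx m : ℕ} {ρmax K₁ : ℝ} (hρ : 0 ≤ ρmax) (hK₁ : 1 ≤ K₁)
    {f : EucSp nx → EucSp m → EucSp nx}
    (hfc : Continuous fun p : EucSp nx × EucSp m => f p.1 p.2)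
    (hLip : ∀ (x' x'' : EucSp nx) (u' u'' : EucSp m), ‖u'‖ ≤ ρmax → ‖u''‖ ≤ ρmax →
      ‖f x' u' - f x'' u''‖ ≤ K₁ * (‖x' - x''‖ + ‖u' - u''‖))
    {T : ℝ} {u : ℝ → EucSp m} (hu : AdmissibleCtrl T ρmax u)
    {a : ℝ} (ha : 0 ≤ a) (hab : a + 1 ≤ T)
    {x : ℝ → EucSp nx} (hx : IsSolOn f u a (a + 1) x) :
    ∀ t ∈ Set.Icc a (a + 1),
      ‖x t‖ ≤ 2 ^ (max 2 ⌈2 * K₁⌉₊) * (‖x a‖ + 2 * (‖f 0 0‖ + K₁ * ρmax)) := by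
  set C : ℝ := ‖f 0 0‖ + K₁ * ρmax with hCdef
  have hK₁0 : (0:ℝ) ≤ K₁ := by linarith
  have hC0 : 0 ≤ C := by positivity
  have hsub : Set.Icc a (a + 1) ⊆ Set.Icc 0 T := Set.Icc_subset_Icc ha hab
  set h : ℝ → EucSp nx := fun s => f (x s) (u s) with hhdef
  -- pointwise bound
  have hbnd : ∀ s ∈ Set.Icc a (a + 1), ‖h s‖ ≤ C + K₁ * ‖x s‖ := by
    intro s hs
    have hus : ‖u s‖ ≤ ρmax := hu.2 s (hsub hs)
    have h0 : ‖(0 : EucSp m)‖ ≤ ρmax := by simpa using hρ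
    have := hLip (x s) 0 (u s) 0 hus h0
    have h2 : ‖h s‖ - ‖f 0 0‖ ≤ ‖f (x s) (u s) - f 0 0‖ :=
      norm_sub_norm_le (f (x s) (u s)) (f 0 0)
    simp only [sub_zero] at this
    nlinarith [norm_nonneg (x s)]
  -- max of ‖x‖ on the interval
  obtain ⟨t₀, ht₀mem, ht₀⟩ : ∃ t₀ ∈ Set.Icc a (a+1), ∀ s ∈ Set.Icc a (a+1), ‖x s‖ ≤ ‖x t₀‖ := by
    obtain ⟨t₀, ht₀mem, ht₀⟩ := isCompact_Icc.exists_isMaxOn (Set.nonempty_Icc.2 (by linarith))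
      (continuous_norm.comp_continuousOn hx.1)
    exact ⟨t₀, ht₀mem, fun s hs => ht₀ hs⟩
  set M : ℝ := ‖x t₀‖ with hMdef
  have hM0 : 0 ≤ M := norm_nonneg _
  -- measurability / integrability
  obtain ⟨D, hD⟩ := hu.1
  have hucont : ContinuousOn u (Set.Icc a (a+1) \ ↑D) := by
    intro t ht
    exact ((hD t (hsub ht.1) ht.2).mono hsub).mono Set.diff_subset
  have hhcont : ContinuousOn h (Set.Icc a (a+1) \ ↑D) := by
    have he : h = (fun p : EucSp nx × EucSp m => f p.1 p.2) ∘ (fun s => (x s, u s)) := rfl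
    rw [he]
    exact hfc.comp_continuousOn ((hx.1.mono Set.diff_subset).prodMk hucont)
  have hDmeas : MeasurableSet (↑D : Set ℝ) := D.finite_toSet.measurableSet
  have hDnull : volume (↑D : Set ℝ) = 0 := D.countable_toSet.measure_zero _
  have hrestr : volume.restrict (Set.Icc a (a+1) \ ↑D) = volume.restrict (Set.Icc a (a+1)) :=
    Measure.restrict_congr_set (MeasureTheory.diff_ae_eq_self.2 (measure_mono_null Set.inter_subset_right hDnull))
  have hmeas : AEStronglyMeasurable h (volume.restrict (Set.Icc a (a+1))) := by
    rw [← hrestr]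
    exact hhcont.aestronglyMeasurable (measurableSet_Icc.diff hDmeas)
  have hInt : IntegrableOn h (Set.Icc a (a+1)) volume := by
    refine Integrable.mono' (g := fun _ => C + K₁ * M) (integrableOn_const measure_Icc_lt_top.ne) hmeas ?_
    · rw [ae_restrict_iff' measurableSet_Icc]
      filter_upwards with s hs
      exact (hbnd s hs).trans (by nlinarith [ht₀ s hs])
  have hII : ∀ c t, c ∈ Set.Icc a (a+1) → t ∈ Set.Icc a (a+1) → IntervalIntegrable h volume c t := by
    intro c t hc htm
    rw [intervalIntegrable_iff]
    exact hInt.mono_set (Set.uIoc_subset_uIcc.trans (Set.uIcc_subset_Icc hc htm))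
  have step : ∀ c t R, a ≤ c → c ≤ t → t ≤ a + 1 → (∀ s ∈ Set.Icc c t, ‖x s‖ ≤ R) →
      ‖x t‖ ≤ ‖x c‖ + (t - c) * (C + K₁ * R) := by
    intro c t R hac hct hta hR
    have hcm : c ∈ Set.Icc a (a+1) := ⟨hac, by linarith⟩
    have htm : t ∈ Set.Icc a (a+1) := ⟨by linarith, hta⟩
    have ham : a ∈ Set.Icc a (a+1) := ⟨le_refl _, by linarith⟩
    have e3 : x t - x c = ∫ s in c..t, h s := by
      rw [hx.2 t htm, hx.2 c hcm]
      rw [← intervalIntegral.integral_interval_sub_left (hII a t ham htm) (hII a c ham hcm)]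
      abel
    have e4 : ‖∫ s in c..t, h s‖ ≤ (C + K₁ * R) * |t - c| := by
      apply intervalIntegral.norm_integral_le_of_norm_le_const
      intro s hs
      rw [Set.uIoc_of_le hct] at hs
      have hsm : s ∈ Set.Icc a (a+1) := ⟨by linarith [hs.1], by linarith [hs.2]⟩
      have b1 := hbnd s hsm
      have b2 := hR s ⟨hs.1.le, hs.2⟩
      nlinarith
    have e5 : ‖x t‖ - ‖x c‖ ≤ ‖x t - x c‖ := norm_sub_norm_le _ _
    rw [e3] at e5
    rw [abs_of_nonneg (by linarith)] at e4
    linarith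
  -- the grid
  set N : ℕ := max 2 ⌈2 * K₁⌉₊ with hNdef
  have hN2 : (2:ℕ) ≤ N := le_max_left _ _
  have hNr : (2:ℝ) ≤ (N:ℝ) := by exact_mod_cast hN2
  have hNpos : (0:ℝ) < (N:ℝ) := by linarith
  have hNK : 2 * K₁ ≤ (N:ℝ) := by
    refine (Nat.le_ceil (2 * K₁)).trans ?_
    exact_mod_cast Nat.le_max_right 2 ⌈2 * K₁⌉₊
  set gr : ℕ → ℝ := fun k => a + (k:ℝ) / N with hgrdef
  have hgmono : ∀ k : ℕ, gr k ≤ gr (k+1) := by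
    intro k
    simp only [hgrdef]
    have h1 : (k:ℝ) ≤ ((k:ℕ):ℝ) + 1 := by linarith
    gcongr
    push_cast
    linarith
  have hgrange : ∀ k : ℕ, k ≤ N → gr k ∈ Set.Icc a (a+1) := by
    intro k hk
    constructor
    · simp only [hgrdef]
      have : (0:ℝ) ≤ (k:ℝ) / N := by positivity
      linarith
    · simp only [hgrdef]
      have : (k:ℝ) / N ≤ 1 := by
        rw [div_le_one hNpos]
        exact_mod_cast hk
      linarith
  have hgend : gr N = a + 1 := by
    simp only [hgrdef]
    rw [div_self (ne_of_gt hNpos)]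
  -- per-piece bound
  have piece : ∀ k : ℕ, k + 1 ≤ N → ∀ t ∈ Set.Icc (gr k) (gr (k+1)),
      ‖x t‖ ≤ 2 * ‖x (gr k)‖ + 2 * C := by
    intro k hk1
    have hgk := hgrange k (by omega)
    have hgk1 := hgrange (k+1) hk1
    have hle : gr k ≤ gr (k+1) := hgmono k
    have hsub2 : Set.Icc (gr k) (gr (k+1)) ⊆ Set.Icc a (a+1) :=
      Set.Icc_subset_Icc hgk.1 hgk1.2
    obtain ⟨t₁, ht₁mem, ht₁⟩ := isCompact_Icc.exists_isMaxOn (Set.nonempty_Icc.2 hle)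
      (continuous_norm.comp_continuousOn (hx.1.mono hsub2))
    set Mk : ℝ := ‖x t₁‖ with hMkdef
    have hMk : ∀ s ∈ Set.Icc (gr k) (gr (k+1)), ‖x s‖ ≤ Mk := fun s hs => ht₁ hs
    have hMk0 : 0 ≤ Mk := norm_nonneg _
    have key := step (gr k) t₁ Mk hgk.1 ht₁mem.1 (ht₁mem.2.trans hgk1.2)
      (fun s hs => hMk s ⟨hs.1, hs.2.trans ht₁mem.2⟩)
    have hstep1 : gr (k+1) - gr k = 1 / N := by
      simp only [hgrdef]
      have hNne : (N:ℝ) ≠ 0 := ne_of_gt hNpos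
      push_cast
      field_simp
      ring
    rw [← hMkdef] at key
    have hdiff : t₁ - gr k ≤ 1 / (N:ℝ) := hstep1 ▸ sub_le_sub_right ht₁mem.2 (gr k)
    have hCK : 0 ≤ C + K₁ * Mk := by positivity
    have e6 : (t₁ - gr k) * (C + K₁ * Mk) ≤ (1/N) * (C + K₁ * Mk) :=
      mul_le_mul_of_nonneg_right hdiff hCK
    have e8 : C / N ≤ C := div_le_self hC0 (by linarith)
    have e9 : (K₁ / N) * Mk ≤ (1/2) * Mk := by
      apply mul_le_mul_of_nonneg_right ?_ hMk0
      rw [div_le_iff₀ hNpos]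
      linarith
    have hMkb : Mk ≤ 2 * ‖x (gr k)‖ + 2 * C := by
      clear_value gr Mk C N
      have : (1/N) * (C + K₁ * Mk) = C / N + (K₁ / N) * Mk := by ring
      linarith
    intro t ht
    exact (hMk t ht).trans hMkb
  -- induction over the pieces
  set S : ℝ := ‖x a‖ + 2 * C with hSdef
  have hS0 : 0 ≤ S := by positivity
  have hSx : ‖x a‖ ≤ S := by simp only [hSdef]; linarith
  have main : ∀ k : ℕ, k ≤ N →
      (‖x (gr k)‖ ≤ 2 ^ k * S - 2 * C ∧ ∀ t ∈ Set.Icc a (gr k), ‖x t‖ ≤ 2 ^ N * S) := by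
    intro k
    induction k with
    | zero =>
        intro _
        have hg0 : gr 0 = a := by simp [hgrdef]
        constructor
        · rw [hg0, pow_zero, one_mul]
          simp only [hSdef]
          linarith
        · intro t ht
          rw [hg0] at ht
          have : t = a := le_antisymm ht.2 ht.1
          rw [this]
          have h1 : (1:ℝ) ≤ 2 ^ N := one_le_pow₀ (by norm_num)
          have h2 : 1 * S ≤ 2 ^ N * S := mul_le_mul_of_nonneg_right h1 hS0
          linarith
    | succ k ih =>
        intro hk1
        have ihk := ih (by omega)
        have hp := piece k hk1
        have hb1 : ‖x (gr (k+1))‖ ≤ 2 * ‖x (gr k)‖ + 2 * C :=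
          hp (gr (k+1)) ⟨hgmono k, le_refl _⟩
        have hpow : (2:ℝ) ^ (k+1) = 2 * 2 ^ k := by ring
        constructor
        · rw [hpow]
          have := ihk.1
          linarith
        · intro t ht
          by_cases hc : t ≤ gr k
          · exact ihk.2 t ⟨ht.1, hc⟩
          · have hb2 := hp t ⟨(not_le.1 hc).le, ht.2⟩
            have hple : (2:ℝ) ^ (k+1) ≤ 2 ^ N := by
              apply pow_le_pow_right₀ (by norm_num) hk1
            have e : (2:ℝ) ^ (k+1) * S = 2 * (2 ^ k * S) := by rw [hpow]; ring
            have e2 : (2:ℝ) ^ (k+1) * S ≤ 2 ^ N * S := mul_le_mul_of_nonneg_right hple hS0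
            have := ihk.1
            linarith
  intro t ht
  have := (main N le_rfl).2 t (by rw [hgend]; exact ht)
  exact this


end BST

/-- Bounded state trajectory, Proposition 8: for each `i ∈ {2,…,T}` there is a
finite collection of exponent sequences with positive constants (independent of the control
and the observations) bounding `‖x i t‖` by a polynomial in `‖y₁‖, …, ‖y_{i−1}‖`; for
`i = 1` the bound is a constant `α₁(x₀)`. -/
theorem bounded_state_trajectory {nx ny m : ℕ} (T : ℕ) (hT : 0 < T)
    (ρmax K₁ : ℝ) (hK₁ : 1 ≤ K₁)
    (K₂ K₃ K₄ K₅ : ℝ) (hK₂ : 0 ≤ K₂) (hK₃ : 0 ≤ K₃) (hK₄ : 0 ≤ K₄) (hK₅ : 0 ≤ K₅)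
    (L₁ L₂ : ℕ) (hL₁ : 0 < L₁) (hL₂ : 0 < L₂)
    (f : EucSp nx → EucSp m → EucSp nx)
    (hf : ContDiff ℝ 1 fun p : EucSp nx × EucSp m => f p.1 p.2)
    (hLip : ∀ (x' x'' : EucSp nx) (u' u'' : EucSp m), ‖u'‖ ≤ ρmax → ‖u''‖ ≤ ρmax →
      ‖f x' u' - f x'' u''‖ ≤ K₁ * (‖x' - x''‖ + ‖u' - u''‖))
    (g : EucSp nx → EucSp ny → EucSp nx)
    (hgc : Continuous fun p : EucSp nx × EucSp ny => g p.1 p.2)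
    (hgd : ∀ yy : EucSp ny, Differentiable ℝ fun z => g z yy)
    (hgb : ∀ (z : EucSp nx) (yy : EucSp ny),
      ‖g z yy‖ ≤ K₂ + K₃ * ‖z‖ ^ L₁ + K₄ * ‖yy‖ ^ L₂ + K₅ * ‖z‖ ^ L₁ * ‖yy‖ ^ L₂ ∧
      ‖fderiv ℝ (fun w => g w yy) z‖ ≤
        K₂ + K₃ * ‖z‖ ^ L₁ + K₄ * ‖yy‖ ^ L₂ + K₅ * ‖z‖ ^ L₁ * ‖yy‖ ^ L₂)
    (x₀ : EucSp nx) :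
    (∃ α₁ : ℝ, 0 < α₁ ∧
      ∀ u : ℝ → EucSp m, AdmissibleCtrl (T : ℝ) ρmax u →
      ∀ (y : ℕ → EucSp ny) (x : ℕ → ℝ → EucSp nx), HybridModes T f g u y x₀ x →
      ∀ t ∈ Set.Icc (0 : ℝ) 1, ‖x 1 t‖ ≤ α₁) ∧
    ∀ i : ℕ, 2 ≤ i → i ≤ T →
      ∃ K : List ((ℕ → ℕ) × ℝ), (∀ p ∈ K, 0 < p.2) ∧
        ∀ u : ℝ → EucSp m, AdmissibleCtrl (T : ℝ) ρmax u →
        ∀ (y : ℕ → EucSp ny) (x : ℕ → ℝ → EucSp nx), HybridModes T f g u y x₀ x →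
        ∀ t ∈ Set.Icc ((i : ℝ) - 1) (i : ℝ),
          ‖x i t‖ ≤
            (K.map fun p => p.2 * ∏ mm ∈ Finset.Icc 1 (i - 1), ‖y mm‖ ^ p.1 mm).sum := by
  classical
  by_cases hρ : 0 ≤ ρmax
  · -- main case
    have hfc : Continuous fun p : EucSp nx × EucSp m => f p.1 p.2 := hf.continuous
    have hK₁0 : (0:ℝ) ≤ K₁ := by linarith
    set C : ℝ := ‖f 0 0‖ + K₁ * ρmax with hCdef
    set A : ℝ := 2 ^ (max 2 ⌈2 * K₁⌉₊) with hAdef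
    have hA1 : (1:ℝ) ≤ A := one_le_pow₀ (by norm_num)
    have hA0 : (0:ℝ) < A := by linarith
    have hC0 : (0:ℝ) ≤ C := by positivity
    have claim : ∀ i : ℕ, 1 ≤ i → i ≤ T →
        ∃ K : List ((ℕ → ℕ) × ℝ), (∀ p ∈ K, 0 < p.2) ∧ BST.Vanish (i-1) K ∧
          ∀ u : ℝ → EucSp m, AdmissibleCtrl (T : ℝ) ρmax u →
          ∀ (y : ℕ → EucSp ny) (x : ℕ → ℝ → EucSp nx), HybridModes T f g u y x₀ x →
          ∀ t ∈ Set.Icc ((i : ℝ) - 1) (i : ℝ),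
            ‖x i t‖ ≤ BST.eval (fun mm => ‖y mm‖) (i-1) K := by
      intro i hi
      induction i, hi using Nat.le_induction with
      | base =>
          intro _
          refine ⟨[(fun _ => 0, A * (‖x₀‖ + 2*C) + 1)], ?_, ?_, ?_⟩
          · intro p hp
            simp only [List.mem_singleton] at hp
            rw [hp]
            have : (0:ℝ) ≤ A * (‖x₀‖ + 2*C) := by positivity
            simp only
            linarith
          · intro p hp mm _
            simp only [List.mem_singleton] at hp
            rw [hp]
          · intro u hu y x hyb t ht
            have hsol := hyb.2.1 1 le_rfl hT
            rw [show ((1:ℕ):ℝ) - 1 = (0:ℝ) by norm_num,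
              show ((1:ℕ):ℝ) = (0:ℝ) + 1 by norm_num] at hsol
            have hTr : (0:ℝ) + 1 ≤ (T:ℝ) := by
              have h1T : (1:ℕ) ≤ T := hT
              have : (1:ℝ) ≤ (T:ℝ) := by exact_mod_cast h1T
              linarith
            have hbd := BST.solBound hρ hK₁ hfc hLip hu le_rfl hTr hsol
            rw [show ((1:ℕ):ℝ) - 1 = (0:ℝ) by norm_num,
              show ((1:ℕ):ℝ) = (0:ℝ) + 1 by norm_num] at ht
            have h1 := hbd t ht
            rw [hyb.1, ← hAdef, ← hCdef] at h1
            have heval : BST.eval (fun mm => ‖y mm‖) (1-1)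
                [((fun _ => 0 : ℕ → ℕ), A * (‖x₀‖ + 2*C) + 1)] = A * (‖x₀‖ + 2*C) + 1 := by
              simp [BST.eval, show Finset.Icc 1 0 = (∅ : Finset ℕ) from
                Finset.Icc_eq_empty (by omega)]
            rw [heval]
            linarith
      | succ i hi ih =>
          intro hiT1
          obtain ⟨K, hKpos, hKvan, hKbd⟩ := ih (by omega)
          set B := BST.Kpow K L₁ with hBdef
          have hBpos := BST.Kpow_pos hKpos L₁
          have hBvan := BST.Vanish_Kpow hKvan L₁
          set p₁ : (ℕ → ℕ) × ℝ := (fun _ => 0, A*K₃+1) with hp₁def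
          set p₃ : (ℕ → ℕ) × ℝ := (fun mm => if mm = i then L₂ else 0, A*K₅+1) with hp₃def
          set e₀ : (ℕ → ℕ) × ℝ := (fun _ => 0, A*(K₂+2*C)+1) with he₀def
          set e₂ : (ℕ → ℕ) × ℝ := (fun mm => if mm = i then L₂ else 0, A*K₄+1) with he₂def
          set l₁ := B.map fun q => (fun mm => p₁.1 mm + q.1 mm, p₁.2 * q.2) with hl₁def
          set l₃ := B.map fun q => (fun mm => p₃.1 mm + q.1 mm, p₃.2 * q.2) with hl₃def
          refine ⟨e₀ :: e₂ :: (l₁ ++ l₃), ?_, ?_, ?_⟩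
          · -- positivity of constants
            intro p hp
            have hc₀ : (0:ℝ) < A*(K₂+2*C)+1 := by nlinarith
            have hc₂ : (0:ℝ) < A*K₄+1 := by nlinarith
            have hc₁ : (0:ℝ) < A*K₃+1 := by nlinarith
            have hc₃ : (0:ℝ) < A*K₅+1 := by nlinarith
            simp only [List.mem_cons, List.mem_append, hl₁def, hl₃def, List.mem_map] at hp
            rcases hp with rfl | rfl | ⟨q, hq, rfl⟩ | ⟨q, hq, rfl⟩
            · exact hc₀
            · exact hc₂
            · exact mul_pos hc₁ (hBpos q hq)
            · exact mul_pos hc₃ (hBpos q hq)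
          · -- vanishing of exponents above (i+1)-1 = i
            intro p hp mm hmm
            rw [Nat.add_sub_cancel] at hmm
            have hmmne : mm ≠ i := by omega
            have hKv : ∀ q ∈ B, q.1 mm = 0 := fun q hq => hBvan q hq mm (by omega)
            simp only [List.mem_cons, List.mem_append, hl₁def, hl₃def, List.mem_map] at hp
            rcases hp with rfl | rfl | ⟨q, hq, rfl⟩ | ⟨q, hq, rfl⟩
            · rfl
            · simp [he₂def, hmmne]
            · simp [hp₁def, hKv q hq]
            · simp [hp₃def, hmmne, hKv q hq]
          · -- the bound
            intro u hu y x hyb t ht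
            set Y : ℕ → ℝ := fun mm => ‖y mm‖ with hYdef
            have hY0 : ∀ mm, 0 ≤ Y mm := fun mm => norm_nonneg _
            set S : ℝ := BST.eval Y (i-1) K with hSdef
            have hS : ‖x i (i:ℝ)‖ ≤ S := by
              refine hKbd u hu y x hyb (i:ℝ) ⟨by linarith, le_refl _⟩
            have hS0 : (0:ℝ) ≤ S := (norm_nonneg _).trans hS
            set P : ℝ := S ^ L₁ with hPdef
            set Q : ℝ := ‖y i‖ ^ L₂ with hQdef
            have hP0 : (0:ℝ) ≤ P := by positivity
            have hQ0 : (0:ℝ) ≤ Q := by positivity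
            have hjump : x (i+1) (i:ℝ) = g (x i (i:ℝ)) (y i) := hyb.2.2 i hi hiT1
            have hx0b : ‖x (i+1) (i:ℝ)‖ ≤ K₂ + K₃ * P + K₄ * Q + K₅ * P * Q := by
              rw [hjump]
              refine (hgb (x i (i:ℝ)) (y i)).1.trans ?_
              have hpw : ‖x i (i:ℝ)‖ ^ L₁ ≤ P := pow_le_pow_left₀ (norm_nonneg _) hS L₁
              have h5 : K₅ * ‖x i (i:ℝ)‖ ^ L₁ * Q ≤ K₅ * P * Q := by
                apply mul_le_mul_of_nonneg_right ?_ hQ0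
                exact mul_le_mul_of_nonneg_left hpw hK₅
              have h3 : K₃ * ‖x i (i:ℝ)‖ ^ L₁ ≤ K₃ * P := mul_le_mul_of_nonneg_left hpw hK₃
              rw [hPdef, hQdef] at *
              linarith
            have hcast1 : ((i+1:ℕ):ℝ) - 1 = (i:ℝ) := by push_cast; ring
            have hcast2 : ((i+1:ℕ):ℝ) = (i:ℝ) + 1 := by push_cast; ring
            have hsol := hyb.2.1 (i+1) (by omega) hiT1
            rw [hcast1, hcast2] at hsol
            rw [hcast1, hcast2] at ht
            have hTr : (i:ℝ) + 1 ≤ (T:ℝ) := by exact_mod_cast hiT1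
            have hbd := BST.solBound hρ hK₁ hfc hLip hu (Nat.cast_nonneg i) hTr hsol t ht
            rw [← hAdef, ← hCdef] at hbd
            -- evaluate the polynomial list
            have hext : BST.eval Y i B = P := by
              rw [BST.eval_extend Y (Nat.sub_le i 1) hBvan, BST.eval_Kpow]
            have hprod0 : (∏ mm ∈ Finset.Icc 1 i, Y mm ^ (0:ℕ)) = 1 := by simp
            have hprodi : (∏ mm ∈ Finset.Icc 1 i, Y mm ^ (if mm = i then L₂ else 0)) = Q := by
              rw [Finset.prod_eq_single_of_mem i (Finset.mem_Icc.2 ⟨hi, le_refl i⟩)]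
              · simp [hQdef, hYdef]
              · intro b _ hb
                simp [hb]
            have heval : BST.eval Y ((i+1)-1) (e₀ :: e₂ :: (l₁ ++ l₃)) =
                (A*(K₂+2*C)+1) + (A*K₄+1) * Q + (A*K₃+1) * P + ((A*K₅+1) * Q) * P := by
              rw [Nat.add_sub_cancel, BST.eval_cons, BST.eval_cons, BST.eval_append,
                hl₁def, hl₃def, BST.eval_map_single, BST.eval_map_single, hext]
              rw [he₀def, he₂def, hp₁def, hp₃def]
              simp only
              rw [hprod0, hprodi]
              ring
            rw [heval]
            have hfin : A * (‖x (i+1) (i:ℝ)‖ + 2*C) ≤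
                A * ((K₂ + K₃ * P + K₄ * Q + K₅ * P * Q) + 2*C) := by
              apply mul_le_mul_of_nonneg_left ?_ hA0.le
              linarith
            have hPQ : (0:ℝ) ≤ Q * P := mul_nonneg hQ0 hP0
            clear_value A C Y S P Q B
            linarith [hbd, hfin, hP0, hQ0, hPQ]
    constructor
    · -- i = 1
      obtain ⟨K, hKpos, _, hKbd⟩ := claim 1 le_rfl hT
      refine ⟨(K.map Prod.snd).sum + 1, ?_, ?_⟩
      · have : (0:ℝ) ≤ (K.map Prod.snd).sum := by
          apply List.sum_nonneg
          intro a ha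
          simp only [List.mem_map] at ha
          obtain ⟨p, hp, rfl⟩ := ha
          exact (hKpos p hp).le
        linarith
      · intro u hu y x hyb t ht
        have ht' : t ∈ Set.Icc (((1:ℕ):ℝ) - 1) ((1:ℕ):ℝ) := by
          simp only [Nat.cast_one]
          norm_num
          exact ht
        have := hKbd u hu y x hyb t ht'
        have heq : BST.eval (fun mm => ‖y mm‖) (1-1) K = (K.map Prod.snd).sum := by
          unfold BST.eval
          congr 1
          apply List.map_congr_left
          intro p hp
          rw [show Finset.Icc 1 (1-1) = (∅ : Finset ℕ) from Finset.Icc_eq_empty (by omega)]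
          simp
        rw [heq] at this
        linarith
    · -- 2 ≤ i ≤ T
      intro i h2 hiT
      obtain ⟨K, hKpos, _, hKbd⟩ := claim i (by omega) hiT
      exact ⟨K, hKpos, fun u hu y x hyb t ht => hKbd u hu y x hyb t ht⟩
  · -- no admissible control exists
    have habs : ∀ u : ℝ → EucSp m, ¬ AdmissibleCtrl (T : ℝ) ρmax u := by
      intro u hu
      have h0 : (0:ℝ) ∈ Set.Icc (0:ℝ) (T:ℝ) := ⟨le_refl _, by exact_mod_cast Nat.zero_le T⟩
      exact hρ ((norm_nonneg (u 0)).trans (hu.2 0 h0))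
    exact ⟨⟨1, one_pos, fun u hu => absurd hu (habs u)⟩, fun i _ _ =>
      ⟨[], by simp, fun u hu => absurd hu (habs u)⟩⟩
end
end

section
/- Given a fixed initial state x₀, for each i ∈ {2,…,T} there exists a finite set 𝒦′_i of sequences (j₁,…,j_{i−1}) of non-negative integers and finite positive constants α′_i^{(j₁,…,j_{i−1})}(x₀), independent of the observations and the control, such that for every admissible control u ∈ U, every observation sequence (y₁,…,y_T), and every t ∈ [i−1, i], |c(x_i(t), u(t))| ≤ Σ_{(j₁,…,j_{i−1}) ∈ 𝒦′_i} α′_i^{(j₁,…,j_{i−1})}(x₀) ∏_{m=1}^{i−1} ‖y_m‖₂^{j_m}; for i = 1 there is a finite positive constant α′₁(x₀) with |c(x₁(t),u(t))| ≤ α′₁(x₀) for all t ∈ [0,1]; and there is a finite set 𝒦′_{T+1} and constants α′_{T+1}^{(j₁,…,j_T)}(x₀) such that |h(x(T))| ≤ Σ_{(j₁,…,j_T) ∈ 𝒦′_{T+1}} α′_{T+1}^{(j₁,…,j_T)}(x₀) ∏_{m=1}^{T} ‖y_m‖₂^{j_m}. -/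
open Set MeasureTheory Filter Topology

noncomputable section

open scoped Classical

lemma aux_integrable {nx m : ℕ} (T ρmax K₁ : ℝ) (hK₁ : 0 ≤ K₁)
    (f : EucSp nx → EucSp m → EucSp nx)
    (hf : Continuous fun p : EucSp nx × EucSp m => f p.1 p.2)
    (hLip : ∀ (x' x'' : EucSp nx) (u' u'' : EucSp m), ‖u'‖ ≤ ρmax → ‖u''‖ ≤ ρmax →
      ‖f x' u' - f x'' u''‖ ≤ K₁ * (‖x' - x''‖ + ‖u' - u''‖))
    (u : ℝ → EucSp m) (hu : AdmissibleCtrl T ρmax u)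
    (a b : ℝ) (hab : a ≤ b) (h0 : 0 ≤ a) (hbT : b ≤ T)
    (x : ℝ → EucSp nx) (hx : ContinuousOn x (Set.Icc a b)) :
    IntervalIntegrable (fun s => f (x s) (u s)) volume a b := by
  obtain ⟨D, hD⟩ := hu.1
  have hsub : Set.Icc a b ⊆ Set.Icc (0:ℝ) T := Set.Icc_subset_Icc h0 hbT
  have hcu : ContinuousOn u (Set.Icc a b \ (D : Set ℝ)) := by
    intro t ht
    exact (hD t (hsub ht.1) ht.2).mono (fun s hs => hsub hs.1)
  have hcfs : ContinuousOn (fun s => f (x s) (u s)) (Set.Icc a b \ (D : Set ℝ)) :=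
    by have := hf.comp_continuousOn ((hx.mono Set.diff_subset).prodMk hcu); exact this
  have hMS : MeasurableSet (Set.Icc a b \ (D : Set ℝ)) :=
    measurableSet_Icc.diff D.finite_toSet.measurableSet
  have haesm : AEStronglyMeasurable (fun s => f (x s) (u s))
      (volume.restrict (Set.Icc a b)) := by
    have hD0 : (volume : Measure ℝ) (D : Set ℝ) = 0 :=
      D.finite_toSet.countable.measure_zero _
    have hre : volume.restrict (Set.Icc a b \ (D : Set ℝ)) = volume.restrict (Set.Icc a b) :=
      Measure.restrict_congr_set
        (diff_ae_eq_self.2 (measure_mono_null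
          (Set.inter_subset_right : Set.Icc a b ∩ (D : Set ℝ) ⊆ _) hD0))
    rw [← hre]
    exact hcfs.aestronglyMeasurable hMS
  obtain ⟨t0, _, ht0⟩ := isCompact_Icc.exists_isMaxOn ⟨a, Set.left_mem_Icc.2 hab⟩
    (continuous_norm.comp_continuousOn hx)
  have hρ : 0 ≤ ρmax := le_trans (norm_nonneg _) (hu.2 a ⟨h0, le_trans hab hbT⟩)
  have hbnd : ∀ s ∈ Set.Icc a b, ‖f (x s) (u s)‖ ≤ ‖f 0 0‖ + K₁ * (‖x t0‖ + ρmax) := by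
    intro s hs
    have h1 := hLip (x s) 0 (u s) 0 (hu.2 s (hsub hs)) (by simpa using hρ)
    have h2 : ‖f (x s) (u s)‖ ≤ ‖f (x s) (u s) - f 0 0‖ + ‖f 0 0‖ := by
      simpa using norm_add_le (f (x s) (u s) - f 0 0) (f 0 0)
    simp only [sub_zero] at h1
    have h3 : ‖u s‖ ≤ ρmax := hu.2 s (hsub hs)
    have h4 : ‖x s‖ ≤ ‖x t0‖ := ht0 hs
    nlinarith [norm_nonneg (x s), norm_nonneg (u s)]
  rw [intervalIntegrable_iff_integrableOn_Icc_of_le hab]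
  refine Integrable.mono' (g := fun _ => ‖f 0 0‖ + K₁ * (‖x t0‖ + ρmax))
    (integrableOn_const measure_Icc_lt_top.ne) haesm ?_
  exact (ae_restrict_iff' measurableSet_Icc).2 (Filter.Eventually.of_forall hbnd)
set_option maxHeartbeats 1000000 in
lemma aux_modeBound {nx m : ℕ} (ρmax K₁ : ℝ) (hK₁ : 1 ≤ K₁) (hρ : 0 ≤ ρmax)
    (f : EucSp nx → EucSp m → EucSp nx)
    (hLip : ∀ (x' x'' : EucSp nx) (u' u'' : EucSp m), ‖u'‖ ≤ ρmax → ‖u''‖ ≤ ρmax →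
      ‖f x' u' - f x'' u''‖ ≤ K₁ * (‖x' - x''‖ + ‖u' - u''‖))
    (u : ℝ → EucSp m) (a b : ℝ) (hb : b = a + 1)
    (hu : ∀ s ∈ Set.Icc a b, ‖u s‖ ≤ ρmax)
    (x : ℝ → EucSp nx)
    (hsol : IsSolOn f u a b x)
    (hint : IntervalIntegrable (fun s => f (x s) (u s)) volume a b) :
    ∀ t ∈ Set.Icc a b,
      ‖x t‖ ≤ (‖x a‖ + 2 * (‖f 0 0‖ + K₁ * ρmax) + 1) * 3 ^ (⌈2 * K₁⌉₊) := by
  subst hb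
  set C := ‖f 0 0‖ + K₁ * ρmax with hCdef
  clear_value C
  have hC : 0 ≤ C := by
    rw [hCdef]
    exact add_nonneg (norm_nonneg _) (mul_nonneg (by linarith) hρ)
  set n := ⌈2 * K₁⌉₊ with hndef
  clear_value n
  have hn2 : 2 * K₁ ≤ (n : ℝ) := by rw [hndef]; exact Nat.le_ceil _
  have hn1 : (1 : ℝ) ≤ (n : ℝ) := by linarith
  have hnpos : (0 : ℝ) < (n : ℝ) := by linarith
  have hfb : ∀ s ∈ Set.Icc a (a + 1), ‖f (x s) (u s)‖ ≤ C + K₁ * ‖x s‖ := by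
    intro s hs
    have h1 := hLip (x s) 0 (u s) 0 (hu s hs) (by simpa using hρ)
    have h2 : ‖f (x s) (u s)‖ ≤ ‖f (x s) (u s) - f 0 0‖ + ‖f 0 0‖ := by
      simpa using norm_add_le (f (x s) (u s) - f 0 0) (f 0 0)
    simp only [sub_zero] at h1
    have h3 : ‖u s‖ ≤ ρmax := hu s hs
    nlinarith [norm_nonneg (x s), norm_nonneg (u s)]
  have key : ∀ k : ℕ, ∀ t ∈ Set.Icc a (min (a + 1) (a + (k : ℝ) / (n : ℝ))),
      ‖x t‖ ≤ (‖x a‖ + 2 * C + 1) * 3 ^ k := by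
    intro k
    induction k with
    | zero =>
      intro t ht
      have ht2 : t ≤ a := le_trans ht.2 (by simp)
      have hte : t = a := le_antisymm ht2 ht.1
      rw [hte]
      simp only [pow_zero, mul_one]
      nlinarith [norm_nonneg (x a)]
    | succ k ih =>
      intro t ht
      have h3k : (1 : ℝ) ≤ 3 ^ k := one_le_pow₀ (by norm_num)
      set B := (‖x a‖ + 2 * C + 1) * 3 ^ k with hBdef
      clear_value B
      have hB1 : 1 ≤ B := by nlinarith [norm_nonneg (x a)]
      have hkn0 : (0 : ℝ) ≤ (k : ℝ) / (n : ℝ) := by positivity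
      have h1n0 : (0 : ℝ) ≤ 1 / (n : ℝ) := by positivity
      have h3succ : (‖x a‖ + 2 * C + 1) * 3 ^ (k + 1) = 3 * B := by rw [hBdef]; ring
      by_cases htk : t ≤ a + (k : ℝ) / (n : ℝ)
      · have hres := ih t ⟨ht.1, le_min (le_trans ht.2 (min_le_left _ _)) htk⟩
        rw [h3succ]; linarith
      · push_neg at htk
        set s₀ := min (a + 1) (a + (k : ℝ) / (n : ℝ)) with hs₀def
        clear_value s₀
        have has₀ : a ≤ s₀ := by rw [hs₀def]; exact le_min (by linarith) (by linarith)
        have hs₀t : s₀ ≤ t := by rw [hs₀def]; exact le_trans (min_le_right _ _) (le_of_lt htk)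
        set t' := min (a + 1) (a + ((k : ℕ) + 1 : ℝ) / (n : ℝ)) with ht'def
        clear_value t'
        have hJsub : Set.Icc s₀ t' ⊆ Set.Icc a (a + 1) :=
          Set.Icc_subset_Icc has₀ (by rw [ht'def]; exact min_le_left _ _)
        have htJ : t ∈ Set.Icc s₀ t' := ⟨hs₀t, by
          have := ht.2; rw [ht'def]; push_cast; push_cast at this; exact this⟩
        obtain ⟨ts, htsJ, hts⟩ := isCompact_Icc.exists_isMaxOn ⟨t, htJ⟩
          (continuous_norm.comp_continuousOn (hsol.1.mono hJsub))
        have hs₀I : s₀ ∈ Set.Icc a (a + 1) := ⟨has₀, by rw [hs₀def]; exact min_le_left _ _⟩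
        have htsI : ts ∈ Set.Icc a (a + 1) := hJsub htsJ
        have hs₀ts : s₀ ≤ ts := htsJ.1
        have hi1 : IntervalIntegrable (fun s => f (x s) (u s)) volume a ts := by
          apply hint.mono_set
          rw [Set.uIcc_of_le htsI.1, Set.uIcc_of_le (by linarith : a ≤ a + 1)]
          exact Set.Icc_subset_Icc le_rfl htsI.2
        have hi2 : IntervalIntegrable (fun s => f (x s) (u s)) volume a s₀ := by
          apply hint.mono_set
          rw [Set.uIcc_of_le hs₀I.1, Set.uIcc_of_le (by linarith : a ≤ a + 1)]
          exact Set.Icc_subset_Icc le_rfl hs₀I.2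
        have heq : x ts - x s₀ = ∫ s in s₀..ts, f (x s) (u s) := by
          rw [hsol.2 ts htsI, hsol.2 s₀ hs₀I]
          rw [add_sub_add_left_eq_sub]
          exact intervalIntegral.integral_interval_sub_left hi1 hi2
        have hts_s₀ : ts - s₀ ≤ 1 / (n : ℝ) := by
          have h1 : ts ≤ t' := htsJ.2
          have h2 : t' ≤ s₀ + 1 / (n : ℝ) := by
            rw [ht'def, hs₀def]
            have : a + ((k : ℕ) + 1 : ℝ) / (n : ℝ) = (a + (k : ℝ) / (n : ℝ)) + 1 / (n : ℝ) := by
              push_cast; field_simp; ring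
            rw [this]
            calc min (a + 1) (a + (k : ℝ) / (n : ℝ) + 1 / (n : ℝ))
                ≤ min (a + 1 + 1 / (n : ℝ)) (a + (k : ℝ) / (n : ℝ) + 1 / (n : ℝ)) := by
                  exact min_le_min (by linarith) le_rfl
              _ = min (a + 1) (a + (k : ℝ) / (n : ℝ)) + 1 / (n : ℝ) := by
                  rw [min_add_add_right]
          linarith
        have hnorm : ‖x ts - x s₀‖ ≤ (C + K₁ * ‖x ts‖) * |ts - s₀| := by
          rw [heq]
          apply intervalIntegral.norm_integral_le_of_norm_le_const
          intro s hs
          rw [Set.uIoc_of_le hs₀ts] at hs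
          have hsJ : s ∈ Set.Icc s₀ t' := ⟨le_of_lt hs.1, le_trans hs.2 htsJ.2⟩
          have hf1 := hfb s (hJsub hsJ)
          have hf2 : ‖x s‖ ≤ ‖x ts‖ := hts hsJ
          nlinarith
        have habs : |ts - s₀| = ts - s₀ := abs_of_nonneg (by linarith)
        have htri : ‖x ts‖ ≤ ‖x s₀‖ + ‖x ts - x s₀‖ := by
          simpa using norm_add_le (x s₀) (x ts - x s₀)
        have hs₀B : ‖x s₀‖ ≤ B := ih s₀ ⟨has₀, le_rfl⟩
        have hXb : ‖x ts‖ ≤ 2 * B + 2 * C := by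
          rw [habs] at hnorm
          have hCK : 0 ≤ C + K₁ * ‖x ts‖ := by nlinarith [norm_nonneg (x ts)]
          have h5 : (C + K₁ * ‖x ts‖) * (ts - s₀) ≤ (C + K₁ * ‖x ts‖) * (1 / (n : ℝ)) :=
            mul_le_mul_of_nonneg_left hts_s₀ hCK
          have hKn : K₁ * (1 / (n : ℝ)) ≤ 1 / 2 := by
            rw [mul_one_div, div_le_div_iff₀ hnpos (by norm_num : (0:ℝ) < 2)]
            linarith
          have hCn : C * (1 / (n : ℝ)) ≤ C := by
            have h1 : 1 / (n : ℝ) ≤ 1 := by rw [div_le_one hnpos]; exact hn1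
            nlinarith
          have e1 : (C + K₁ * ‖x ts‖) * (1 / (n : ℝ))
              = C * (1 / (n : ℝ)) + (K₁ * (1 / (n : ℝ))) * ‖x ts‖ := by ring
          have e2 : (K₁ * (1 / (n : ℝ))) * ‖x ts‖ ≤ (1 / 2) * ‖x ts‖ :=
            mul_le_mul_of_nonneg_right hKn (norm_nonneg (x ts))
          linarith
        have hfin : ‖x t‖ ≤ ‖x ts‖ := hts htJ
        have h2CB : 2 * C ≤ B := by
          have := mul_le_mul_of_nonneg_left h3k
            (by nlinarith [norm_nonneg (x a)] : (0:ℝ) ≤ ‖x a‖ + 2 * C + 1)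
          rw [hBdef]
          nlinarith [norm_nonneg (x a)]
        rw [h3succ]
        linarith
  intro t ht
  have hnn : ((n : ℕ) : ℝ) / (n : ℝ) = 1 := div_self (ne_of_gt hnpos)
  refine key n t ⟨ht.1, ?_⟩
  rw [hnn]
  simpa using ht.2
lemma aux_gb {nx ny : ℕ} (K₂ K₃ K₄ K₅ : ℝ) (hK₂ : 0 ≤ K₂) (hK₃ : 0 ≤ K₃)
    (hK₄ : 0 ≤ K₄) (hK₅ : 0 ≤ K₅) (L₁ L₂ : ℕ)
    (g : EucSp nx → EucSp ny → EucSp nx)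
    (hgb : ∀ (z : EucSp nx) (yy : EucSp ny),
      ‖g z yy‖ ≤ K₂ + K₃ * ‖z‖ ^ L₁ + K₄ * ‖yy‖ ^ L₂ + K₅ * ‖z‖ ^ L₁ * ‖yy‖ ^ L₂)
    (z : EucSp nx) (yy : EucSp ny) (c P : ℝ) (hc : 0 ≤ c) (hP : 1 ≤ P)
    (hz : ‖z‖ ≤ c * P) :
    ‖g z yy‖ ≤ (K₂ + K₄ + (K₃ + K₅) * c ^ L₁) * (P ^ L₁ * (1 + ‖yy‖) ^ L₂) := by
  have hB0 : (0:ℝ) ≤ (1 + ‖yy‖) ^ L₂ := by positivity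
  have h1 : ‖z‖ ^ L₁ ≤ c ^ L₁ * P ^ L₁ := by
    rw [← mul_pow]; exact pow_le_pow_left₀ (norm_nonneg _) hz _
  have h2 : ‖yy‖ ^ L₂ ≤ (1 + ‖yy‖) ^ L₂ :=
    pow_le_pow_left₀ (norm_nonneg _) (by linarith) _
  have h3 : (1:ℝ) ≤ P ^ L₁ := one_le_pow₀ hP
  have h4 : (1:ℝ) ≤ (1 + ‖yy‖) ^ L₂ := one_le_pow₀ (by linarith [norm_nonneg yy])
  have hcP : (0:ℝ) ≤ c ^ L₁ * P ^ L₁ := by positivity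
  have t1 : K₂ ≤ K₂ * (P ^ L₁ * (1 + ‖yy‖) ^ L₂) :=
    le_mul_of_one_le_right hK₂ (by nlinarith)
  have t2 : K₃ * ‖z‖ ^ L₁ ≤ K₃ * (c ^ L₁ * (P ^ L₁ * (1 + ‖yy‖) ^ L₂)) := by
    refine mul_le_mul_of_nonneg_left ?_ hK₃
    calc ‖z‖ ^ L₁ ≤ c ^ L₁ * P ^ L₁ := h1
      _ ≤ c ^ L₁ * P ^ L₁ * (1 + ‖yy‖) ^ L₂ := le_mul_of_one_le_right hcP h4
      _ = c ^ L₁ * (P ^ L₁ * (1 + ‖yy‖) ^ L₂) := by ring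
  have t3 : K₄ * ‖yy‖ ^ L₂ ≤ K₄ * (P ^ L₁ * (1 + ‖yy‖) ^ L₂) := by
    refine mul_le_mul_of_nonneg_left ?_ hK₄
    calc ‖yy‖ ^ L₂ ≤ (1 + ‖yy‖) ^ L₂ := h2
      _ ≤ P ^ L₁ * (1 + ‖yy‖) ^ L₂ := le_mul_of_one_le_left hB0 h3
  have t4 : K₅ * ‖z‖ ^ L₁ * ‖yy‖ ^ L₂ ≤ K₅ * (c ^ L₁ * (P ^ L₁ * (1 + ‖yy‖) ^ L₂)) := by
    have h5 : ‖z‖ ^ L₁ * ‖yy‖ ^ L₂ ≤ (c ^ L₁ * P ^ L₁) * (1 + ‖yy‖) ^ L₂ :=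
      mul_le_mul h1 h2 (by positivity) hcP
    calc K₅ * ‖z‖ ^ L₁ * ‖yy‖ ^ L₂ = K₅ * (‖z‖ ^ L₁ * ‖yy‖ ^ L₂) := by ring
      _ ≤ K₅ * ((c ^ L₁ * P ^ L₁) * (1 + ‖yy‖) ^ L₂) := mul_le_mul_of_nonneg_left h5 hK₅
      _ = K₅ * (c ^ L₁ * (P ^ L₁ * (1 + ‖yy‖) ^ L₂)) := by ring
  nlinarith [hgb z yy]

lemma aux_prodStep (j : ℕ) (a : ℕ → ℝ) (ha : ∀ mm, 0 ≤ a mm) (N L₁ L₂ : ℕ) :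
    (∏ mm ∈ Finset.Icc 1 j, (1 + a mm) ^ N) ^ L₁ * (1 + a (j + 1)) ^ L₂ ≤
      ∏ mm ∈ Finset.Icc 1 (j + 1), (1 + a mm) ^ (max (N * L₁) L₂) := by
  have h1a : ∀ mm, (1:ℝ) ≤ 1 + a mm := fun mm => by linarith [ha mm]
  rw [Finset.prod_Icc_succ_top (by omega : 1 ≤ j + 1)]
  have e1 : (∏ mm ∈ Finset.Icc 1 j, (1 + a mm) ^ N) ^ L₁
      = ∏ mm ∈ Finset.Icc 1 j, (1 + a mm) ^ (N * L₁) := by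
    rw [← Finset.prod_pow]
    exact Finset.prod_congr rfl (fun mm _ => by rw [← pow_mul])
  rw [e1]
  have h2 : ∏ mm ∈ Finset.Icc 1 j, (1 + a mm) ^ (N * L₁)
      ≤ ∏ mm ∈ Finset.Icc 1 j, (1 + a mm) ^ (max (N * L₁) L₂) :=
    Finset.prod_le_prod (fun mm _ => pow_nonneg (by linarith [ha mm]) _)
      (fun mm _ => pow_le_pow_right₀ (h1a mm) (le_max_left _ _))
  have h3 : (1 + a (j + 1)) ^ L₂ ≤ (1 + a (j + 1)) ^ (max (N * L₁) L₂) :=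
    pow_le_pow_right₀ (h1a _) (le_max_right _ _)
  exact mul_le_mul h2 h3 (pow_nonneg (by linarith [ha (j+1)]) _)
    (Finset.prod_nonneg (fun mm _ => pow_nonneg (by linarith [ha mm]) _))

lemma aux_poly_list (r : Finset ℕ) (M : ℕ) (γ : ℝ) (hγ : 0 ≤ γ) (a : ℕ → ℝ)
    (ha : ∀ mm, 0 ≤ a mm) :
    γ * ∏ mm ∈ r, (1 + a mm) ^ M ≤
      ((r.powerset.toList.map
          (fun S => ((fun mm => if mm ∈ S then M else 0 : ℕ → ℕ), γ * 2 ^ (M * r.card)))).map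
        (fun p => p.2 * ∏ mm ∈ r, (a mm) ^ (p.1 mm))).sum := by
  rw [List.map_map, Finset.sum_map_toList]
  have hprod : ∀ S ∈ r.powerset,
      ((fun p : (ℕ → ℕ) × ℝ => p.2 * ∏ mm ∈ r, (a mm) ^ (p.1 mm)) ∘
        (fun S => ((fun mm => if mm ∈ S then M else 0 : ℕ → ℕ), γ * 2 ^ (M * r.card)))) S
      = γ * 2 ^ (M * r.card) * ∏ mm ∈ S, a mm ^ M := by
    intro S hS
    rw [Finset.mem_powerset] at hS
    simp only [Function.comp_apply]
    congr 1
    calc ∏ mm ∈ r, a mm ^ (if mm ∈ S then M else 0)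
        = ∏ mm ∈ r, (if mm ∈ S then a mm ^ M else 1) :=
          Finset.prod_congr rfl (fun mm _ => by split <;> simp)
      _ = ∏ mm ∈ r ∩ S, a mm ^ M := Finset.prod_ite_mem r S _
      _ = ∏ mm ∈ S, a mm ^ M := by rw [Finset.inter_eq_right.2 hS]
  rw [Finset.sum_congr rfl hprod, ← Finset.mul_sum]
  have hexp : ∑ S ∈ r.powerset, ∏ mm ∈ S, a mm ^ M = ∏ mm ∈ r, (a mm ^ M + 1) := by
    rw [Finset.prod_add]
    exact Finset.sum_congr rfl (fun S _ => by simp)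
  rw [hexp]
  have hpt : ∀ mm ∈ r, (1 + a mm) ^ M ≤ 2 ^ M * (a mm ^ M + 1) := by
    intro mm _
    have hm0 := ha mm
    have hpw : (0:ℝ) ≤ a mm ^ M := by positivity
    rcases le_total (a mm) 1 with hle | hle
    · have : (1 + a mm) ^ M ≤ 2 ^ M := pow_le_pow_left₀ (by linarith) (by linarith) M
      nlinarith [one_le_pow₀ (by norm_num : (1:ℝ) ≤ 2) (n := M)]
    · have h2a : (1 + a mm) ^ M ≤ (2 * a mm) ^ M :=
        pow_le_pow_left₀ (by linarith) (by linarith) M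
      rw [mul_pow] at h2a
      nlinarith [one_le_pow₀ (by norm_num : (1:ℝ) ≤ 2) (n := M)]
  calc γ * ∏ mm ∈ r, (1 + a mm) ^ M
      ≤ γ * ∏ mm ∈ r, (2 ^ M * (a mm ^ M + 1)) :=
        mul_le_mul_of_nonneg_left
          (Finset.prod_le_prod (fun mm _ => pow_nonneg (by linarith [ha mm]) _) hpt) hγ
    _ = γ * 2 ^ (M * r.card) * ∏ mm ∈ r, (a mm ^ M + 1) := by
        rw [Finset.prod_mul_distrib, Finset.prod_const, ← pow_mul]; ring

lemma aux_one_le_prod (r : Finset ℕ) (a : ℕ → ℝ) (ha : ∀ mm, 0 ≤ a mm) (N : ℕ) :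
    (1:ℝ) ≤ ∏ mm ∈ r, (1 + a mm) ^ N := by
  calc (1:ℝ) = ∏ _mm ∈ r, 1 := by simp
    _ ≤ ∏ mm ∈ r, (1 + a mm) ^ N :=
      Finset.prod_le_prod (fun _ _ => zero_le_one)
        (fun mm _ => one_le_pow₀ (by linarith [ha mm] : (1:ℝ) ≤ 1 + a mm))
set_option maxHeartbeats 1000000 in
lemma aux_stateBound {nx ny m : ℕ} (T : ℕ) (hT : 0 < T)
    (ρmax K₁ : ℝ) (hK₁ : 1 ≤ K₁) (hρ : 0 ≤ ρmax)
    (K₂ K₃ K₄ K₅ : ℝ) (hK₂ : 0 ≤ K₂) (hK₃ : 0 ≤ K₃) (hK₄ : 0 ≤ K₄) (hK₅ : 0 ≤ K₅)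
    (L₁ L₂ : ℕ)
    (f : EucSp nx → EucSp m → EucSp nx)
    (hf : Continuous fun p : EucSp nx × EucSp m => f p.1 p.2)
    (hLip : ∀ (x' x'' : EucSp nx) (u' u'' : EucSp m), ‖u'‖ ≤ ρmax → ‖u''‖ ≤ ρmax →
      ‖f x' u' - f x'' u''‖ ≤ K₁ * (‖x' - x''‖ + ‖u' - u''‖))
    (g : EucSp nx → EucSp ny → EucSp nx)
    (hgb1 : ∀ (z : EucSp nx) (yy : EucSp ny),
      ‖g z yy‖ ≤ K₂ + K₃ * ‖z‖ ^ L₁ + K₄ * ‖yy‖ ^ L₂ + K₅ * ‖z‖ ^ L₁ * ‖yy‖ ^ L₂)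
    (x₀ : EucSp nx) :
    ∀ i : ℕ, 1 ≤ i → i ≤ T → ∃ c : ℝ, ∃ N : ℕ, 1 ≤ c ∧
      ∀ u : ℝ → EucSp m, AdmissibleCtrl (T : ℝ) ρmax u →
      ∀ (y : ℕ → EucSp ny) (x : ℕ → ℝ → EucSp nx), HybridModes T f g u y x₀ x →
      ∀ t ∈ Set.Icc ((i : ℝ) - 1) (i : ℝ),
        ‖x i t‖ ≤ c * ∏ mm ∈ Finset.Icc 1 (i - 1), (1 + ‖y mm‖) ^ N := by
  have hC0 : (0:ℝ) ≤ ‖f 0 0‖ + K₁ * ρmax :=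
    add_nonneg (norm_nonneg _) (mul_nonneg (by linarith) hρ)
  have h3n : (1:ℝ) ≤ 3 ^ (⌈2 * K₁⌉₊) := one_le_pow₀ (by norm_num)
  refine Nat.le_induction ?_ ?_
  · -- base case i = 1
    intro h1T
    refine ⟨(‖x₀‖ + 2 * (‖f 0 0‖ + K₁ * ρmax) + 1) * 3 ^ (⌈2 * K₁⌉₊), 0, ?_, ?_⟩
    · nlinarith [norm_nonneg x₀]
    · intro u hu y x hmod t ht
      have h1Tr : (1:ℝ) ≤ (T:ℝ) := by exact_mod_cast h1T
      have ht1 : (0:ℝ) ≤ t := by have := ht.1; push_cast at this; linarith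
      have ht2 : t ≤ 1 := by have := ht.2; push_cast at this; linarith
      have hsol : IsSolOn f u ((1:ℝ) - 1) ((1:ℝ) - 1 + 1) (x 1) := by
        have := hmod.2.1 1 le_rfl h1T
        norm_num at this ⊢
        exact this
      have hu' : ∀ s ∈ Set.Icc ((1:ℝ) - 1) ((1:ℝ) - 1 + 1), ‖u s‖ ≤ ρmax := by
        intro s hs
        refine hu.2 s ⟨by linarith [hs.1], by linarith [hs.2]⟩
      have hint : IntervalIntegrable (fun s => f (x 1 s) (u s)) volume ((1:ℝ) - 1) ((1:ℝ) - 1 + 1) :=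
        aux_integrable (T:ℝ) ρmax K₁ (by linarith) f hf hLip u hu
          _ _ (by norm_num) (by norm_num) (by norm_num; exact_mod_cast h1T) (x 1) hsol.1
      have hmb := aux_modeBound ρmax K₁ hK₁ hρ f hLip u ((1:ℝ) - 1) ((1:ℝ) - 1 + 1) rfl
        hu' (x 1) hsol hint t ⟨by linarith, by linarith⟩
      have h0 : x 1 ((1:ℝ) - 1) = x₀ := by norm_num; exact hmod.1
      rw [h0] at hmb
      simpa using hmb
  · -- inductive step
    intro i h1i ih hiT
    obtain ⟨c, N, hc1, hbd⟩ := ih (by omega)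
    have hc0 : (0:ℝ) ≤ c := by linarith
    set A := K₂ + K₄ + (K₃ + K₅) * c ^ L₁ with hAdef
    have hA0 : 0 ≤ A := by
      have : (0:ℝ) ≤ c ^ L₁ := by positivity
      rw [hAdef]; nlinarith
    refine ⟨3 ^ (⌈2 * K₁⌉₊) * (A + 2 * (‖f 0 0‖ + K₁ * ρmax) + 1), max (N * L₁) L₂, ?_, ?_⟩
    · nlinarith
    · intro u hu y x hmod t ht
      obtain ⟨j, rfl⟩ : ∃ j, i = j + 1 := ⟨i - 1, by omega⟩
      have hprev := hbd u hu y x hmod ((j:ℝ) + 1)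
        ⟨by push_cast; linarith, by push_cast; linarith⟩
      set P := ∏ mm ∈ Finset.Icc 1 (j + 1 - 1), (1 + ‖y mm‖) ^ N with hPdef
      have hP1 : 1 ≤ P := by
        rw [hPdef]
        exact aux_one_le_prod _ (fun mm => ‖y mm‖) (fun mm => norm_nonneg _) _
      have hjump : x (j + 1 + 1) ((j + 1 : ℕ) : ℝ) = g (x (j + 1) ((j + 1 : ℕ) : ℝ)) (y (j + 1)) :=
        hmod.2.2 (j + 1) (by omega) hiT
      have hprev' : ‖x (j + 1) ((j + 1 : ℕ) : ℝ)‖ ≤ c * P := by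
        push_cast
        exact hprev
      have hg : ‖x (j + 1 + 1) ((j + 1 : ℕ) : ℝ)‖ ≤ A * (P ^ L₁ * (1 + ‖y (j + 1)‖) ^ L₂) := by
        rw [hjump, hAdef]
        exact aux_gb K₂ K₃ K₄ K₅ hK₂ hK₃ hK₄ hK₅ L₁ L₂ g hgb1 _ _ c P hc0 hP1 hprev'
      have hQ : P ^ L₁ * (1 + ‖y (j + 1)‖) ^ L₂
          ≤ ∏ mm ∈ Finset.Icc 1 (j + 1), (1 + ‖y mm‖) ^ (max (N * L₁) L₂) := by
        rw [hPdef]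
        simpa using aux_prodStep j (fun mm => ‖y mm‖) (fun mm => norm_nonneg _) N L₁ L₂
      -- now the ODE bound on mode j+2
      have hsol : IsSolOn f u (((j + 1 + 1 : ℕ) : ℝ) - 1) (((j + 1 + 1 : ℕ) : ℝ) - 1 + 1)
          (x (j + 1 + 1)) := by
        have := hmod.2.1 (j + 1 + 1) (by omega) hiT
        have he : (((j + 1 + 1 : ℕ) : ℝ) - 1 + 1) = ((j + 1 + 1 : ℕ) : ℝ) := by push_cast; ring
        rw [he]
        exact this
      have hu' : ∀ s ∈ Set.Icc (((j + 1 + 1 : ℕ) : ℝ) - 1) (((j + 1 + 1 : ℕ) : ℝ) - 1 + 1),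
          ‖u s‖ ≤ ρmax := by
        intro s hs
        have hTr : ((j + 1 + 1 : ℕ) : ℝ) ≤ (T:ℝ) := by exact_mod_cast hiT
        refine hu.2 s ⟨?_, ?_⟩
        · have : (0:ℝ) ≤ ((j + 1 + 1 : ℕ) : ℝ) - 1 := by push_cast; linarith
          linarith [hs.1]
        · have := hs.2; push_cast at this hTr ⊢; linarith
      have hint : IntervalIntegrable (fun s => f (x (j + 1 + 1) s) (u s)) volume
          (((j + 1 + 1 : ℕ) : ℝ) - 1) (((j + 1 + 1 : ℕ) : ℝ) - 1 + 1) :=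
        aux_integrable (T:ℝ) ρmax K₁ (by linarith) f hf hLip u hu _ _ (by linarith)
          (by push_cast; linarith) (by have : ((j + 1 + 1 : ℕ) : ℝ) ≤ (T:ℝ) := by exact_mod_cast hiT
                                       push_cast at this ⊢; linarith)
          (x (j + 1 + 1)) hsol.1
      have hmb := aux_modeBound ρmax K₁ hK₁ hρ f hLip u _ _ rfl hu' (x (j + 1 + 1)) hsol hint t
        (by constructor
            · have := ht.1; push_cast at this ⊢; linarith
            · have := ht.2; push_cast at this ⊢; linarith)
      have hsa : (((j + 1 + 1 : ℕ) : ℝ) - 1) = ((j + 1 : ℕ) : ℝ) := by push_cast; ring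
      rw [hsa] at hmb
      set Q := ∏ mm ∈ Finset.Icc 1 (j + 1), (1 + ‖y mm‖) ^ (max (N * L₁) L₂) with hQdef
      have hQ1 : 1 ≤ Q := by
        rw [hQdef]
        exact aux_one_le_prod _ (fun mm => ‖y mm‖) (fun mm => norm_nonneg _) _
      have hgq : ‖x (j + 1 + 1) ((j + 1 : ℕ) : ℝ)‖ ≤ A * Q :=
        le_trans hg (mul_le_mul_of_nonneg_left hQ hA0)
      have hfin : ‖x (j + 1 + 1) t‖
          ≤ (A * Q + 2 * (‖f 0 0‖ + K₁ * ρmax) + 1) * 3 ^ (⌈2 * K₁⌉₊) := by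
        refine le_trans hmb ?_
        have h2 : (0:ℝ) ≤ 3 ^ (⌈2 * K₁⌉₊) := by positivity
        nlinarith [hmb, norm_nonneg (x (j + 1 + 1) ((j + 1 : ℕ) : ℝ))]
      have hstep : (A * Q + 2 * (‖f 0 0‖ + K₁ * ρmax) + 1) * 3 ^ (⌈2 * K₁⌉₊)
          ≤ 3 ^ (⌈2 * K₁⌉₊) * (A + 2 * (‖f 0 0‖ + K₁ * ρmax) + 1) * Q := by
        have e1 : A * Q ≤ A * Q := le_rfl
        have e2 : 2 * (‖f 0 0‖ + K₁ * ρmax) + 1 ≤ (2 * (‖f 0 0‖ + K₁ * ρmax) + 1) * Q :=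
          le_mul_of_one_le_right (by linarith) hQ1
        nlinarith [mul_le_mul_of_nonneg_right (add_le_add e1 e2)
          (le_of_lt (by positivity : (0:ℝ) < 3 ^ (⌈2 * K₁⌉₊)))]
      calc ‖x (j + 1 + 1) t‖ ≤ (A * Q + 2 * (‖f 0 0‖ + K₁ * ρmax) + 1) * 3 ^ (⌈2 * K₁⌉₊) := hfin
        _ ≤ 3 ^ (⌈2 * K₁⌉₊) * (A + 2 * (‖f 0 0‖ + K₁ * ρmax) + 1) * Q := hstep
        _ = 3 ^ (⌈2 * K₁⌉₊) * (A + 2 * (‖f 0 0‖ + K₁ * ρmax) + 1)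
            * ∏ mm ∈ Finset.Icc 1 (j + 1 + 1 - 1), (1 + ‖y mm‖) ^ (max (N * L₁) L₂) := by
          rw [hQdef]
          norm_num
set_option maxHeartbeats 2000000 in
/-- Bounded cost functions, Proposition 9: the instantaneous cost along the
hybrid trajectory and the terminal cost are bounded by polynomials in the observation
norms, with constants independent of the control and the observations. -/
theorem bounded_cost_functions {nx ny m : ℕ} (T : ℕ) (hT : 0 < T)
    (ρmax K₁ : ℝ) (hK₁ : 1 ≤ K₁)
    (K₂ K₃ K₄ K₅ : ℝ) (hK₂ : 0 ≤ K₂) (hK₃ : 0 ≤ K₃) (hK₄ : 0 ≤ K₄) (hK₅ : 0 ≤ K₅)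
    (L₁ L₂ : ℕ) (hL₁ : 0 < L₁) (hL₂ : 0 < L₂)
    (K₆ K₇ : ℝ) (hK₆ : 0 ≤ K₆) (hK₇ : 0 ≤ K₇) (L₃ : ℕ) (hL₃ : 0 < L₃)
    (f : EucSp nx → EucSp m → EucSp nx)
    (hf : ContDiff ℝ 1 fun p : EucSp nx × EucSp m => f p.1 p.2)
    (hLip : ∀ (x' x'' : EucSp nx) (u' u'' : EucSp m), ‖u'‖ ≤ ρmax → ‖u''‖ ≤ ρmax →
      ‖f x' u' - f x'' u''‖ ≤ K₁ * (‖x' - x''‖ + ‖u' - u''‖))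
    (g : EucSp nx → EucSp ny → EucSp nx)
    (hgc : Continuous fun p : EucSp nx × EucSp ny => g p.1 p.2)
    (hgd : ∀ yy : EucSp ny, Differentiable ℝ fun z => g z yy)
    (hgb : ∀ (z : EucSp nx) (yy : EucSp ny),
      ‖g z yy‖ ≤ K₂ + K₃ * ‖z‖ ^ L₁ + K₄ * ‖yy‖ ^ L₂ + K₅ * ‖z‖ ^ L₁ * ‖yy‖ ^ L₂ ∧
      ‖fderiv ℝ (fun w => g w yy) z‖ ≤
        K₂ + K₃ * ‖z‖ ^ L₁ + K₄ * ‖yy‖ ^ L₂ + K₅ * ‖z‖ ^ L₁ * ‖yy‖ ^ L₂)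
    (c : EucSp nx → EucSp m → ℝ)
    (hcc : Continuous fun p : EucSp nx × EucSp m => c p.1 p.2)
    (hcx : ∀ uu : EucSp m, ContDiff ℝ 1 fun z => c z uu)
    (h : EucSp nx → ℝ) (hh : Differentiable ℝ h)
    (hcb : ∀ (z : EucSp nx) (uu : EucSp m), ‖uu‖ ≤ ρmax →
      |c z uu| ≤ K₆ + K₇ * ‖z‖ ^ L₃ ∧
      ‖fderiv ℝ (fun w => c w uu) z‖ ≤ K₆ + K₇ * ‖z‖ ^ L₃ ∧
      |h z| ≤ K₆ + K₇ * ‖z‖ ^ L₃ ∧ ‖fderiv ℝ h z‖ ≤ K₆ + K₇ * ‖z‖ ^ L₃)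
    (x₀ : EucSp nx) :
    (∃ α₁ : ℝ, 0 < α₁ ∧
      ∀ u : ℝ → EucSp m, AdmissibleCtrl (T : ℝ) ρmax u →
      ∀ (y : ℕ → EucSp ny) (x : ℕ → ℝ → EucSp nx), HybridModes T f g u y x₀ x →
      ∀ t ∈ Set.Icc (0 : ℝ) 1, |c (x 1 t) (u t)| ≤ α₁) ∧
    (∀ i : ℕ, 2 ≤ i → i ≤ T →
      ∃ K : List ((ℕ → ℕ) × ℝ), (∀ p ∈ K, 0 < p.2) ∧
        ∀ u : ℝ → EucSp m, AdmissibleCtrl (T : ℝ) ρmax u →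
        ∀ (y : ℕ → EucSp ny) (x : ℕ → ℝ → EucSp nx), HybridModes T f g u y x₀ x →
        ∀ t ∈ Set.Icc ((i : ℝ) - 1) (i : ℝ),
          |c (x i t) (u t)| ≤
            (K.map fun p => p.2 * ∏ mm ∈ Finset.Icc 1 (i - 1), ‖y mm‖ ^ p.1 mm).sum) ∧
    ∃ K : List ((ℕ → ℕ) × ℝ), (∀ p ∈ K, 0 < p.2) ∧
      ∀ u : ℝ → EucSp m, AdmissibleCtrl (T : ℝ) ρmax u →
      ∀ (y : ℕ → EucSp ny) (x : ℕ → ℝ → EucSp nx) (X : ℝ → EucSp nx),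
        HybridModes T f g u y x₀ x → IsHybridTraj T g y x X →
        |h (X (T : ℝ))| ≤
          (K.map fun p => p.2 * ∏ mm ∈ Finset.Icc 1 T, ‖y mm‖ ^ p.1 mm).sum := by
  rcases lt_or_ge ρmax 0 with hρneg | hρ
  · -- no admissible control exists
    have habs : ∀ u : ℝ → EucSp m, AdmissibleCtrl (T : ℝ) ρmax u → False := by
      intro u hu
      have h0T : (0:ℝ) ≤ (T:ℝ) := by positivity
      have := hu.2 0 ⟨le_rfl, h0T⟩
      linarith [norm_nonneg (u 0)]
    refine ⟨⟨1, one_pos, fun u hu => (habs u hu).elim⟩,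
      fun i _ _ => ⟨[], by simp, fun u hu => (habs u hu).elim⟩,
      ⟨[], by simp, fun u hu => (habs u hu).elim⟩⟩
  · have hgb1 : ∀ (z : EucSp nx) (yy : EucSp ny),
        ‖g z yy‖ ≤ K₂ + K₃ * ‖z‖ ^ L₁ + K₄ * ‖yy‖ ^ L₂ + K₅ * ‖z‖ ^ L₁ * ‖yy‖ ^ L₂ :=
      fun z yy => (hgb z yy).1
    have hfc : Continuous fun p : EucSp nx × EucSp m => f p.1 p.2 := hf.continuous
    have hSB := aux_stateBound T hT ρmax K₁ hK₁ hρ K₂ K₃ K₄ K₅ hK₂ hK₃ hK₄ hK₅ L₁ L₂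
      f hfc hLip g hgb1 x₀
    have h1Tr : (1:ℝ) ≤ (T:ℝ) := by exact_mod_cast hT
    obtain ⟨c₁, N₁, hc₁, hb₁⟩ := hSB 1 le_rfl hT
    have hc₁0 : (0:ℝ) ≤ c₁ := by linarith
    refine ⟨⟨K₆ + K₇ * c₁ ^ L₃ + 1, ?_, ?_⟩, ?_, ?_⟩
    · nlinarith [pow_nonneg hc₁0 L₃, mul_nonneg hK₇ (pow_nonneg hc₁0 L₃)]
    · -- Part 1 : i = 1
      intro u hu y x hmod t ht
      have hbx := hb₁ u hu y x hmod t
        ⟨by push_cast; linarith [ht.1], by push_cast; linarith [ht.2]⟩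
      have hbx' : ‖x 1 t‖ ≤ c₁ := by simpa using hbx
      have hut : ‖u t‖ ≤ ρmax := hu.2 t ⟨ht.1, le_trans ht.2 h1Tr⟩
      have hcbd := (hcb (x 1 t) (u t) hut).1
      have hpow : ‖x 1 t‖ ^ L₃ ≤ c₁ ^ L₃ := pow_le_pow_left₀ (norm_nonneg _) hbx' _
      nlinarith [mul_le_mul_of_nonneg_left hpow hK₇]
    · -- Part 2 : 2 ≤ i ≤ T
      intro i h2i hiT
      obtain ⟨ci, Ni, hci, hbi⟩ := hSB i (by omega) hiT
      have hci0 : (0:ℝ) ≤ ci := by linarith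
      have hγ : (0:ℝ) < K₆ + K₇ * ci ^ L₃ + 1 := by
        nlinarith [mul_nonneg hK₇ (pow_nonneg hci0 L₃)]
      refine ⟨(Finset.Icc 1 (i - 1)).powerset.toList.map
        (fun S => ((fun mm => if mm ∈ S then Ni * L₃ else 0 : ℕ → ℕ),
          (K₆ + K₇ * ci ^ L₃ + 1) * 2 ^ (Ni * L₃ * (Finset.Icc 1 (i - 1)).card))), ?_, ?_⟩
      · intro p hp
        simp only [List.mem_map] at hp
        obtain ⟨S, _, rfl⟩ := hp
        exact mul_pos hγ (by positivity)
      · intro u hu y x hmod t ht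
        have hbx := hbi u hu y x hmod t ht
        have hiTr : (i:ℝ) ≤ (T:ℝ) := by exact_mod_cast hiT
        have hi2r : (2:ℝ) ≤ (i:ℝ) := by exact_mod_cast h2i
        have hut : ‖u t‖ ≤ ρmax := hu.2 t ⟨by linarith [ht.1], by linarith [ht.2]⟩
        have hcbd := (hcb (x i t) (u t) hut).1
        have hpow : ‖x i t‖ ^ L₃
            ≤ ci ^ L₃ * ∏ mm ∈ Finset.Icc 1 (i - 1), (1 + ‖y mm‖) ^ (Ni * L₃) := by
          calc ‖x i t‖ ^ L₃
              ≤ (ci * ∏ mm ∈ Finset.Icc 1 (i - 1), (1 + ‖y mm‖) ^ Ni) ^ L₃ :=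
                pow_le_pow_left₀ (norm_nonneg _) hbx _
            _ = ci ^ L₃ * ∏ mm ∈ Finset.Icc 1 (i - 1), (1 + ‖y mm‖) ^ (Ni * L₃) := by
                rw [mul_pow, ← Finset.prod_pow]
                congr 1
                exact Finset.prod_congr rfl (fun mm _ => by rw [← pow_mul])
        have hPM1 : (1:ℝ) ≤ ∏ mm ∈ Finset.Icc 1 (i - 1), (1 + ‖y mm‖) ^ (Ni * L₃) :=
          aux_one_le_prod _ (fun mm => ‖y mm‖) (fun mm => norm_nonneg _) _
        have hmain : |c (x i t) (u t)| ≤ (K₆ + K₇ * ci ^ L₃ + 1)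
            * ∏ mm ∈ Finset.Icc 1 (i - 1), (1 + ‖y mm‖) ^ (Ni * L₃) := by
          have h1 := mul_le_mul_of_nonneg_left hpow hK₇
          have h2 : K₆ ≤ K₆ * ∏ mm ∈ Finset.Icc 1 (i - 1), (1 + ‖y mm‖) ^ (Ni * L₃) :=
            le_mul_of_one_le_right hK₆ hPM1
          nlinarith [mul_nonneg hK₇ (pow_nonneg hci0 L₃)]
        refine le_trans hmain ?_
        exact aux_poly_list (Finset.Icc 1 (i - 1)) (Ni * L₃) (K₆ + K₇ * ci ^ L₃ + 1)
          hγ.le (fun mm => ‖y mm‖) (fun mm => norm_nonneg _)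
    · -- Part 3 : terminal cost
      obtain ⟨cT, NT, hcT, hbT2⟩ := hSB T (by omega) le_rfl
      have hcT0 : (0:ℝ) ≤ cT := by linarith
      have hA0 : (0:ℝ) ≤ K₂ + K₄ + (K₃ + K₅) * cT ^ L₁ := by
        nlinarith [mul_nonneg (by linarith : (0:ℝ) ≤ K₃ + K₅) (pow_nonneg hcT0 L₁)]
      have hγ : (0:ℝ) < K₆ + K₇ * (K₂ + K₄ + (K₃ + K₅) * cT ^ L₁) ^ L₃ + 1 := by
        nlinarith [mul_nonneg hK₇ (pow_nonneg hA0 L₃)]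
      refine ⟨(Finset.Icc 1 T).powerset.toList.map
        (fun S => ((fun mm => if mm ∈ S then (max (NT * L₁) L₂) * L₃ else 0 : ℕ → ℕ),
          (K₆ + K₇ * (K₂ + K₄ + (K₃ + K₅) * cT ^ L₁) ^ L₃ + 1)
            * 2 ^ ((max (NT * L₁) L₂) * L₃ * (Finset.Icc 1 T).card))), ?_, ?_⟩
      · intro p hp
        simp only [List.mem_map] at hp
        obtain ⟨S, _, rfl⟩ := hp
        exact mul_pos hγ (by positivity)
      · intro u hu y x X hmod htraj
        obtain ⟨j, rfl⟩ : ∃ j, T = j + 1 := ⟨T - 1, by omega⟩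
        have hprev := hbT2 u hu y x hmod ((j + 1 : ℕ) : ℝ)
          ⟨by push_cast; linarith, le_rfl⟩
        have hXT : X ((j + 1 : ℕ) : ℝ) = g (x (j + 1) ((j + 1 : ℕ) : ℝ)) (y (j + 1)) :=
          htraj.2
        have hP1 : (1:ℝ) ≤ ∏ mm ∈ Finset.Icc 1 (j + 1 - 1), (1 + ‖y mm‖) ^ NT :=
          aux_one_le_prod _ (fun mm => ‖y mm‖) (fun mm => norm_nonneg _) _
        have hgX : ‖X ((j + 1 : ℕ) : ℝ)‖ ≤ (K₂ + K₄ + (K₃ + K₅) * cT ^ L₁)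
            * ((∏ mm ∈ Finset.Icc 1 (j + 1 - 1), (1 + ‖y mm‖) ^ NT) ^ L₁
              * (1 + ‖y (j + 1)‖) ^ L₂) := by
          rw [hXT]
          exact aux_gb K₂ K₃ K₄ K₅ hK₂ hK₃ hK₄ hK₅ L₁ L₂ g hgb1 _ _ cT _ hcT0 hP1 hprev
        have hQ : (∏ mm ∈ Finset.Icc 1 (j + 1 - 1), (1 + ‖y mm‖) ^ NT) ^ L₁
              * (1 + ‖y (j + 1)‖) ^ L₂
            ≤ ∏ mm ∈ Finset.Icc 1 (j + 1), (1 + ‖y mm‖) ^ (max (NT * L₁) L₂) := by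
          simpa using aux_prodStep j (fun mm => ‖y mm‖) (fun mm => norm_nonneg _) NT L₁ L₂
        have hgX2 : ‖X ((j + 1 : ℕ) : ℝ)‖ ≤ (K₂ + K₄ + (K₃ + K₅) * cT ^ L₁)
            * ∏ mm ∈ Finset.Icc 1 (j + 1), (1 + ‖y mm‖) ^ (max (NT * L₁) L₂) :=
          le_trans hgX (mul_le_mul_of_nonneg_left hQ hA0)
        have hu0 : ‖u 0‖ ≤ ρmax := hu.2 0 ⟨le_rfl, by positivity⟩
        have hhb := (hcb (X ((j + 1 : ℕ) : ℝ)) (u 0) hu0).2.2.1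
        have hQM1 : (1:ℝ) ≤ ∏ mm ∈ Finset.Icc 1 (j + 1),
            (1 + ‖y mm‖) ^ ((max (NT * L₁) L₂) * L₃) :=
          aux_one_le_prod _ (fun mm => ‖y mm‖) (fun mm => norm_nonneg _) _
        have hpow : ‖X ((j + 1 : ℕ) : ℝ)‖ ^ L₃ ≤ (K₂ + K₄ + (K₃ + K₅) * cT ^ L₁) ^ L₃
            * ∏ mm ∈ Finset.Icc 1 (j + 1), (1 + ‖y mm‖) ^ ((max (NT * L₁) L₂) * L₃) := by
          calc ‖X ((j + 1 : ℕ) : ℝ)‖ ^ L₃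
              ≤ ((K₂ + K₄ + (K₃ + K₅) * cT ^ L₁)
                * ∏ mm ∈ Finset.Icc 1 (j + 1), (1 + ‖y mm‖) ^ (max (NT * L₁) L₂)) ^ L₃ :=
                pow_le_pow_left₀ (norm_nonneg _) hgX2 _
            _ = (K₂ + K₄ + (K₃ + K₅) * cT ^ L₁) ^ L₃
                * ∏ mm ∈ Finset.Icc 1 (j + 1), (1 + ‖y mm‖) ^ ((max (NT * L₁) L₂) * L₃) := by
                rw [mul_pow, ← Finset.prod_pow]
                congr 1
                exact Finset.prod_congr rfl (fun mm _ => by rw [← pow_mul])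
        have hmain : |h (X ((j + 1 : ℕ) : ℝ))|
            ≤ (K₆ + K₇ * (K₂ + K₄ + (K₃ + K₅) * cT ^ L₁) ^ L₃ + 1)
              * ∏ mm ∈ Finset.Icc 1 (j + 1), (1 + ‖y mm‖) ^ ((max (NT * L₁) L₂) * L₃) := by
          have h1 := mul_le_mul_of_nonneg_left hpow hK₇
          have h2 : K₆ ≤ K₆ * ∏ mm ∈ Finset.Icc 1 (j + 1),
              (1 + ‖y mm‖) ^ ((max (NT * L₁) L₂) * L₃) :=
            le_mul_of_one_le_right hK₆ hQM1
          nlinarith [mul_nonneg hK₇ (pow_nonneg hA0 L₃)]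
        refine le_trans hmain ?_
        exact aux_poly_list (Finset.Icc 1 (j + 1)) ((max (NT * L₁) L₂) * L₃)
          (K₆ + K₇ * (K₂ + K₄ + (K₃ + K₅) * cT ^ L₁) ^ L₃ + 1)
          hγ.le (fun mm => ‖y mm‖) (fun mm => norm_nonneg _)
end
end

section
/- Let u ∈ U, τ ∈ (0,1), v ∈ B(0,ρ_max), and let u^ε be the perturbed control equal to v on (τ−ε, τ] and to u elsewhere. Let x₁ and x₁^ε be the solutions on [0,1] of ẋ = f(x,u) and ẋ = f(x,u^ε) starting at x₀. Then lim_{ε→0⁺} (1/ε) ∫_{τ−ε}^{τ} { f(x₁^ε(t), u^ε(t)) − f(x₁(t), u(t)) } dt = f(x₁(τ), v) − f(x₁(τ), u(τ)). -/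
open Set MeasureTheory Filter Topology

noncomputable section

open scoped Classical

set_option maxHeartbeats 2000000 in
/-- Lemma 12: the averaged difference of the dynamics over the perturbation
interval converges, as `ε → 0⁺`, to `f(x₁(τ), v) − f(x₁(τ), u(τ))`. -/
theorem averaged_dynamics_difference_limit {nx m : ℕ} (T : ℕ) (hT : 1 ≤ T)
    (ρmax K₁ : ℝ) (hK₁ : 1 ≤ K₁)
    (f : EucSp nx → EucSp m → EucSp nx)
    (hf : ContDiff ℝ 1 fun p : EucSp nx × EucSp m => f p.1 p.2)
    (hLip : ∀ (x' x'' : EucSp nx) (u' u'' : EucSp m), ‖u'‖ ≤ ρmax → ‖u''‖ ≤ ρmax →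
      ‖f x' u' - f x'' u''‖ ≤ K₁ * (‖x' - x''‖ + ‖u' - u''‖))
    (u : ℝ → EucSp m) (hu : AdmissibleCtrl (T : ℝ) ρmax u)
    (τ : ℝ) (hτ : τ ∈ Set.Ioo (0 : ℝ) 1) (v : EucSp m) (hv : ‖v‖ ≤ ρmax)
    (huτ : ContinuousWithinAt u (Set.Iic τ) τ)
    (x₀ : EucSp nx) (x : ℝ → EucSp nx) (xe : ℝ → ℝ → EucSp nx)
    (hxnom : x 0 = x₀ ∧ IsSolOn f u 0 1 x)
    (hxe : ∀ ε ∈ Set.Icc (0 : ℝ) τ,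
      xe ε 0 = x₀ ∧ IsSolOn f (perturb u τ v ε) 0 1 (xe ε)) :
    Tendsto
      (fun ε : ℝ => ε⁻¹ •
        ∫ t in (τ - ε)..τ, (f (xe ε t) (perturb u τ v ε t) - f (x t) (u t)))
      (𝓝[>] 0) (𝓝 (f (x τ) v - f (x τ) (u τ))) := by
  obtain ⟨hτ0, hτ1⟩ := hτ
  have hK0 : (0:ℝ) < K₁ := lt_of_lt_of_le one_pos hK₁
  have hρ0 : (0:ℝ) ≤ ρmax := le_trans (norm_nonneg v) hv
  have hT1 : (1:ℝ) ≤ (T:ℝ) := by exact_mod_cast hT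
  obtain ⟨hx0, hxc, hxeq⟩ : x 0 = x₀ ∧ ContinuousOn x (Set.Icc 0 1) ∧
      ∀ t ∈ Set.Icc (0:ℝ) 1, x t = x 0 + ∫ s in (0:ℝ)..t, f (x s) (u s) :=
    ⟨hxnom.1, hxnom.2.1, hxnom.2.2⟩
  have hsub01T : Set.Icc (0:ℝ) 1 ⊆ Set.Icc 0 (T:ℝ) :=
    Set.Icc_subset_Icc le_rfl hT1
  -- bound on f
  have hfb : ∀ (p : EucSp nx) (q : EucSp m), ‖q‖ ≤ ρmax →
      ‖f p q‖ ≤ ‖f 0 0‖ + K₁ * (‖p‖ + ρmax) := by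
    intro p q hq
    have h1 := hLip p 0 q 0 hq (by simpa using hρ0)
    have h2 := norm_sub_norm_le (f p q) (f 0 0)
    simp only [sub_zero] at h1
    nlinarith [norm_nonneg p, norm_nonneg q]
  -- measurability of u
  have huae : AEStronglyMeasurable u (volume.restrict (Set.Icc 0 (T:ℝ))) := by
    obtain ⟨D, hD⟩ := hu.1
    have hcont : ContinuousOn u (Set.Icc 0 (T:ℝ) \ ↑D) := fun t ht =>
      (hD t ht.1 ht.2).mono Set.diff_subset
    have hmeas : MeasurableSet (Set.Icc 0 (T:ℝ) \ ↑D) :=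
      measurableSet_Icc.diff D.finite_toSet.measurableSet
    have h1 : AEStronglyMeasurable u (volume.restrict (Set.Icc 0 (T:ℝ) \ ↑D)) := hcont.aestronglyMeasurable hmeas
    have h2 : volume.restrict (Set.Icc 0 (T:ℝ) \ ↑D) = volume.restrict (Set.Icc 0 (T:ℝ)) := by
      refine Measure.restrict_congr_set (diff_ae_eq_self.2 ?_)
      exact measure_mono_null Set.inter_subset_right (D.countable_toSet.measure_zero _)
    rwa [h2] at h1
  have huae' : ∀ s : Set ℝ, s ⊆ Set.Icc 0 (T:ℝ) →
      AEStronglyMeasurable u (volume.restrict s) :=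
    fun s hs => huae.mono_measure (Measure.restrict_mono hs le_rfl)
  have hpae : ∀ (ε : ℝ) (s : Set ℝ), s ⊆ Set.Icc 0 (T:ℝ) →
      AEStronglyMeasurable (perturb u τ v ε) (volume.restrict s) := by
    intro ε s hs
    have heq : perturb u τ v ε = fun t =>
        (Set.Ioc (τ-ε) τ).indicator (fun _ => v) t + (Set.Ioc (τ-ε) τ)ᶜ.indicator u t := by
      funext t
      by_cases h : t ∈ Set.Ioc (τ-ε) τ
      · simp [perturb, Set.indicator, h, (Set.mem_Ioc.1 h).1, (Set.mem_Ioc.1 h).2]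
      · have h' : ¬ (τ - ε < t ∧ t ≤ τ) := by simpa [Set.mem_Ioc] using h
        simp [perturb, Set.indicator, h, h']
    rw [heq]
    exact (aestronglyMeasurable_const.indicator measurableSet_Ioc).add
      ((huae' s hs).indicator measurableSet_Ioc.compl)
  -- integrability of the vector field along trajectories
  have hinteg : ∀ (X : ℝ → EucSp nx) (w : ℝ → EucSp m) (a b : ℝ), a ≤ b →
      Set.Icc a b ⊆ Set.Icc 0 (1:ℝ) → ContinuousOn X (Set.Icc 0 1) →
      AEStronglyMeasurable w (volume.restrict (Set.Ioc a b)) →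
      (∀ t ∈ Set.Ioc a b, ‖w t‖ ≤ ρmax) →
      IntegrableOn (fun t => f (X t) (w t)) (Set.Ioc a b) := by
    intro X w a b hab hsub hX hw hwb
    obtain ⟨M, hM⟩ := isCompact_Icc.exists_bound_of_continuousOn hX
    have hXae : AEStronglyMeasurable X (volume.restrict (Set.Ioc a b)) :=
      ((hX.mono (Set.Ioc_subset_Icc_self.trans hsub)).aestronglyMeasurable
        measurableSet_Ioc)
    have hpair : AEStronglyMeasurable (fun t => (X t, w t)) (volume.restrict (Set.Ioc a b)) :=
      hXae.prodMk hw
    have hcomp : AEStronglyMeasurable (fun t => f (X t) (w t))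
        (volume.restrict (Set.Ioc a b)) :=
      hf.continuous.comp_aestronglyMeasurable hpair
    refine Integrable.mono' (g := fun _ => ‖f 0 0‖ + K₁ * (M + ρmax))
      (integrableOn_const measure_Ioc_lt_top.ne) hcomp ?_
    filter_upwards [ae_restrict_mem measurableSet_Ioc] with t ht
    have h1 := hfb (X t) (w t) (hwb t ht)
    have h2 : ‖X t‖ ≤ M := hM t (Set.Ioc_subset_Icc_self.trans hsub ht)
    nlinarith [norm_nonneg (X t)]
  -- norm bounds on controls
  have hub : ∀ t ∈ Set.Icc (0:ℝ) 1, ‖u t‖ ≤ ρmax := fun t ht => hu.2 t (hsub01T ht)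
  have hpb : ∀ (ε : ℝ), ∀ t ∈ Set.Icc (0:ℝ) 1, ‖perturb u τ v ε t‖ ≤ ρmax := by
    intro ε t ht
    by_cases h : τ - ε < t ∧ t ≤ τ
    · simpa [perturb, h] using hv
    · simpa [perturb, h] using hub t ht
  set C : ℝ := 2 * K₁ * ρmax with hCdef
  have hC0 : 0 ≤ C := by positivity
  set Cb : ℝ := C * Real.exp K₁ with hCbdef
  have hCb0 : 0 ≤ Cb := mul_nonneg hC0 (Real.exp_nonneg _)
  -- Grönwall : the perturbed trajectory stays close to the nominal one
  have key : ∀ ε : ℝ, 0 < ε → ε < τ → ∀ t ∈ Set.Icc (0:ℝ) τ,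
      ‖xe ε t - x t‖ ≤ Cb * ε := by
    intro ε hε hετ
    obtain ⟨hz0, hzc, hzeq⟩ : xe ε 0 = x₀ ∧ ContinuousOn (xe ε) (Set.Icc 0 1) ∧
        ∀ t ∈ Set.Icc (0:ℝ) 1, xe ε t = xe ε 0 + ∫ s in (0:ℝ)..t, f (xe ε s) (perturb u τ v ε s) :=
      ⟨(hxe ε ⟨hε.le, hετ.le⟩).1, (hxe ε ⟨hε.le, hετ.le⟩).2.1, (hxe ε ⟨hε.le, hετ.le⟩).2.2⟩
    set c : ℝ → ℝ := fun t => max 0 (min t τ) with hcdef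
    have hcc : Continuous c := continuous_const.max (continuous_id.min continuous_const)
    have hcmem : ∀ t, c t ∈ Set.Icc (0:ℝ) τ :=
      fun t => ⟨le_max_left _ _, max_le hτ0.le (min_le_right _ _)⟩
    have hcmem1 : ∀ t, c t ∈ Set.Icc (0:ℝ) 1 :=
      fun t => ⟨(hcmem t).1, le_trans (hcmem t).2 hτ1.le⟩
    have hceq : ∀ t ∈ Set.Icc (0:ℝ) τ, c t = t := by
      intro t ht
      simp [hcdef, min_eq_left ht.2, max_eq_right ht.1]
    set δf : ℝ → ℝ := fun t => ‖xe ε (c t) - x (c t)‖ with hδdef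
    have hδc : Continuous δf := by
      have h1 : Continuous fun t => xe ε (c t) := hzc.comp_continuous hcc hcmem1
      have h2 : Continuous fun t => x (c t) := hxc.comp_continuous hcc hcmem1
      exact (h1.sub h2).norm
    have hδval : ∀ t ∈ Set.Icc (0:ℝ) τ, δf t = ‖xe ε t - x t‖ := by
      intro t ht; simp [hδdef, hceq t ht]
    set G : ℝ → ℝ := fun t => ∫ s in (0:ℝ)..t, δf s with hGdef
    have hG' : ∀ t, HasDerivAt G (δf t) t :=
      fun t => (hδc.integral_hasStrictDerivAt 0 t).hasDerivAt
    -- the fundamental integral inequality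
    have Ineq : ∀ t ∈ Set.Icc (0:ℝ) τ, δf t ≤ K₁ * G t + C * ε := by
      intro t ht
      have ht1 : t ∈ Set.Icc (0:ℝ) 1 := ⟨ht.1, le_trans ht.2 hτ1.le⟩
      have hsubt : Set.Icc (0:ℝ) t ⊆ Set.Icc 0 1 := Set.Icc_subset_Icc le_rfl ht1.2
      have hIoct : Set.Ioc (0:ℝ) t ⊆ Set.Icc 0 (T:ℝ) :=
        (Set.Ioc_subset_Icc_self.trans hsubt).trans hsub01T
      have hi1 : IntegrableOn (fun s => f (xe ε s) (perturb u τ v ε s)) (Set.Ioc 0 t) :=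
        hinteg (xe ε) (perturb u τ v ε) 0 t ht.1 hsubt hzc (hpae ε _ hIoct)
          (fun s hs => hpb ε s (Set.Ioc_subset_Icc_self.trans hsubt hs))
      have hi2 : IntegrableOn (fun s => f (x s) (u s)) (Set.Ioc 0 t) :=
        hinteg x u 0 t ht.1 hsubt hxc (huae' _ hIoct)
          (fun s hs => hub s (Set.Ioc_subset_Icc_self.trans hsubt hs))
      have hteq : xe ε t - x t
          = ∫ s in (0:ℝ)..t, (f (xe ε s) (perturb u τ v ε s) - f (x s) (u s)) := by
        rw [intervalIntegral.integral_sub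
          ((intervalIntegrable_iff_integrableOn_Ioc_of_le ht.1).2 hi1)
          ((intervalIntegrable_iff_integrableOn_Ioc_of_le ht.1).2 hi2)]
        rw [hzeq t ht1, hxeq t ht1, hz0, hx0]
        abel
      set h : ℝ → ℝ := fun s => K₁ * δf s +
          (Set.Ioc (τ-ε) τ).indicator (fun _ => C) s with hhdef
      have hhint : IntegrableOn h (Set.Ioc 0 t) := by
        refine Integrable.add ?_ ?_
        · exact (continuous_const.mul hδc).integrableOn_Ioc
        · exact (integrableOn_const (C := C) measure_Ioc_lt_top.ne).indicator measurableSet_Ioc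
      have hptw : ∀ s ∈ Set.Ioc (0:ℝ) t,
          ‖f (xe ε s) (perturb u τ v ε s) - f (x s) (u s)‖ ≤ h s := by
        intro s hs
        have hs1 : s ∈ Set.Icc (0:ℝ) 1 := Set.Ioc_subset_Icc_self.trans hsubt hs
        have hsτ : s ∈ Set.Icc (0:ℝ) τ := ⟨hs.1.le, le_trans hs.2 ht.2⟩
        have hδs : ‖xe ε s - x s‖ = δf s := (hδval s hsτ).symm
        by_cases hcase : s ∈ Set.Ioc (τ-ε) τ
        · have hps : perturb u τ v ε s = v := by
            simp [perturb, hcase.1, hcase.2]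
          have hl := hLip (xe ε s) (x s) v (u s) hv (hub s hs1)
          have hvu : ‖v - u s‖ ≤ 2 * ρmax := by
            have h3 := norm_sub_le v (u s)
            have h4 := hub s hs1
            linarith [hv]
          have hind : h s = K₁ * δf s + C := by
            simp [hhdef, Set.indicator_of_mem hcase]
          rw [hps, hind]
          calc ‖f (xe ε s) v - f (x s) (u s)‖ ≤ K₁ * (‖xe ε s - x s‖ + ‖v - u s‖) := hl
            _ ≤ K₁ * (δf s + 2 * ρmax) := by rw [hδs]; nlinarith
            _ = K₁ * δf s + C := by rw [hCdef]; ring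
        · have hps : perturb u τ v ε s = u s := by
            have h' : ¬ (τ - ε < s ∧ s ≤ τ) := by simpa [Set.mem_Ioc] using hcase
            simp [perturb, h']
          have hl := hLip (xe ε s) (x s) (u s) (u s) (hub s hs1) (hub s hs1)
          have hind : h s = K₁ * δf s := by
            simp [hhdef, Set.indicator_of_notMem hcase]
          rw [hps, hind]
          calc ‖f (xe ε s) (u s) - f (x s) (u s)‖
              ≤ K₁ * (‖xe ε s - x s‖ + ‖u s - u s‖) := hl
            _ = K₁ * δf s := by rw [hδs]; simp
      have hn1 : δf t ≤ ∫ s in Set.Ioc (0:ℝ) t,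
          ‖f (xe ε s) (perturb u τ v ε s) - f (x s) (u s)‖ := by
        rw [hδval t ht, hteq]
        calc ‖∫ s in (0:ℝ)..t, (f (xe ε s) (perturb u τ v ε s) - f (x s) (u s))‖
            ≤ ∫ s in (0:ℝ)..t, ‖f (xe ε s) (perturb u τ v ε s) - f (x s) (u s)‖ :=
              intervalIntegral.norm_integral_le_integral_norm ht.1
          _ = _ := intervalIntegral.integral_of_le ht.1
      have hn2 : (∫ s in Set.Ioc (0:ℝ) t,
          ‖f (xe ε s) (perturb u τ v ε s) - f (x s) (u s)‖) ≤ ∫ s in Set.Ioc (0:ℝ) t, h s := by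
        refine integral_mono_of_nonneg (ae_of_all _ fun s => norm_nonneg _) hhint ?_
        filter_upwards [ae_restrict_mem measurableSet_Ioc] with s hs
        exact hptw s hs
      have hn3 : (∫ s in Set.Ioc (0:ℝ) t, h s) ≤ K₁ * G t + C * ε := by
        rw [hhdef]
        rw [integral_add (f := fun s => K₁ * δf s) ((continuous_const.mul hδc).integrableOn_Ioc)
          ((integrableOn_const (C := C) measure_Ioc_lt_top.ne).indicator measurableSet_Ioc)]
        have e1 : (∫ s in Set.Ioc (0:ℝ) t, K₁ * δf s) = K₁ * G t := by
          rw [MeasureTheory.integral_const_mul]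
          congr 1
          exact (intervalIntegral.integral_of_le ht.1).symm
        have e2 : (∫ s in Set.Ioc (0:ℝ) t,
            (Set.Ioc (τ-ε) τ).indicator (fun _ => C) s) ≤ C * ε := by
          rw [integral_indicator measurableSet_Ioc, Measure.restrict_restrict measurableSet_Ioc,
            setIntegral_const]
          have hvol : (volume (Set.Ioc (τ-ε) τ ∩ Set.Ioc 0 t)).toReal ≤ ε := by
            have h1 : volume (Set.Ioc (τ-ε) τ ∩ Set.Ioc 0 t) ≤ ENNReal.ofReal ε := by
              refine le_trans (measure_mono Set.inter_subset_left) ?_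
              rw [Real.volume_Ioc]
              simp
            exact ENNReal.toReal_le_of_le_ofReal hε.le h1
          calc (volume (Set.Ioc (τ-ε) τ ∩ Set.Ioc 0 t)).toReal • C
              ≤ ε * C := by
                rw [smul_eq_mul]
                exact mul_le_mul_of_nonneg_right hvol hC0
            _ = C * ε := mul_comm _ _
        linarith
      linarith
    -- apply Grönwall's inequality to G
    have hGron : ∀ t ∈ Set.Icc (0:ℝ) τ, G t ≤ gronwallBound 0 K₁ (C * ε) (t - 0) := by
      refine le_gronwallBound_of_liminf_deriv_right_le
        (f' := δf) (fun t _ => (hG' t).continuousAt.continuousWithinAt) ?_ ?_ ?_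
      · intro s _ r hr
        have hd : Tendsto (slope G s) (𝓝[>] s) (𝓝 (δf s)) := by
          have h1 := (hG' s).hasDerivWithinAt (s := Set.Ioi s)
          rw [hasDerivWithinAt_iff_tendsto_slope] at h1
          have h2 : Set.Ioi s \ {s} = Set.Ioi s :=
            Set.diff_singleton_eq_self (by simp)
          rwa [h2] at h1
        refine ((hd.eventually_lt_const hr).frequently).mono ?_
        intro z hz
        rwa [slope_def_field, div_eq_inv_mul] at hz
      · simp [hGdef]
      · intro s hs
        exact Ineq s ⟨hs.1, hs.2.le⟩
    intro t ht
    have h1 := Ineq t ht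
    have h2 := hGron t ht
    rw [sub_zero, gronwallBound_of_K_ne_0 (ne_of_gt hK0)] at h2
    have hE1 : Real.exp (K₁ * t) ≤ Real.exp K₁ := by
      apply Real.exp_le_exp.2
      nlinarith [ht.1, le_trans ht.2 hτ1.le]
    have hE0 : (1:ℝ) ≤ Real.exp (K₁ * t) :=
      Real.one_le_exp (by nlinarith [ht.1])
    have h3 : K₁ * G t ≤ C * ε * (Real.exp (K₁ * t) - 1) := by
      have h4 := mul_le_mul_of_nonneg_left h2 hK0.le
      calc K₁ * G t ≤ K₁ * (0 * Real.exp (K₁ * t) + C * ε / K₁ * (Real.exp (K₁ * t) - 1)) :=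
            h4
        _ = C * ε * (Real.exp (K₁ * t) - 1) := by field_simp; ring
    rw [← hδval t ht]
    calc δf t ≤ K₁ * G t + C * ε := h1
      _ ≤ C * ε * (Real.exp (K₁ * t) - 1) + C * ε := by linarith
      _ ≤ Cb * ε := by
          rw [hCbdef]
          nlinarith [mul_nonneg hC0 hε.le]
  -- main limit argument
  rw [Metric.tendsto_nhdsWithin_nhds]
  intro η hη
  set η' : ℝ := η / (8 * K₁) with hη'def
  have hη'0 : 0 < η' := by positivity
  have hxτ : τ ∈ Set.Icc (0:ℝ) 1 := ⟨hτ0.le, hτ1.le⟩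
  obtain ⟨θ₁, hθ₁0, hθ₁⟩ := Metric.continuousWithinAt_iff.1 (hxc τ hxτ) η' hη'0
  obtain ⟨θ₂, hθ₂0, hθ₂⟩ := Metric.continuousWithinAt_iff.1 huτ η' hη'0
  set δ₃ : ℝ := η / (8 * (K₁ * Cb + 1)) with hδ₃def
  have hδ₃0 : 0 < δ₃ := by positivity
  refine ⟨min (min θ₁ θ₂) (min τ δ₃), by positivity, ?_⟩
  intro ε hεmem hεd
  have hε : 0 < ε := hεmem
  rw [Real.dist_eq, sub_zero, abs_of_pos hε] at hεd
  have hεθ₁ : ε < θ₁ := lt_of_lt_of_le hεd ((min_le_left _ _).trans (min_le_left _ _))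
  have hεθ₂ : ε < θ₂ := lt_of_lt_of_le hεd ((min_le_left _ _).trans (min_le_right _ _))
  have hετ : ε < τ := lt_of_lt_of_le hεd ((min_le_right _ _).trans (min_le_left _ _))
  have hεδ₃ : ε < δ₃ := lt_of_lt_of_le hεd ((min_le_right _ _).trans (min_le_right _ _))
  have hle : τ - ε ≤ τ := by linarith
  have hτε0 : 0 ≤ τ - ε := by linarith
  obtain ⟨hz0, hzc, hzeq⟩ : xe ε 0 = x₀ ∧ ContinuousOn (xe ε) (Set.Icc 0 1) ∧
      ∀ t ∈ Set.Icc (0:ℝ) 1, xe ε t = xe ε 0 + ∫ s in (0:ℝ)..t, f (xe ε s) (perturb u τ v ε s) :=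
    ⟨(hxe ε ⟨hε.le, hετ.le⟩).1, (hxe ε ⟨hε.le, hετ.le⟩).2.1, (hxe ε ⟨hε.le, hετ.le⟩).2.2⟩
  set L : EucSp nx := f (x τ) v - f (x τ) (u τ) with hLdef
  set g : ℝ → EucSp nx := fun t => f (xe ε t) (perturb u τ v ε t) - f (x t) (u t) with hgdef
  have hsubτ : Set.Icc (τ - ε) τ ⊆ Set.Icc (0:ℝ) 1 := Set.Icc_subset_Icc hτε0 hτ1.le
  have hIocτ : Set.Ioc (τ - ε) τ ⊆ Set.Icc 0 (T:ℝ) :=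
    (Set.Ioc_subset_Icc_self.trans hsubτ).trans hsub01T
  have hgint : IntervalIntegrable g volume (τ - ε) τ := by
    rw [intervalIntegrable_iff_integrableOn_Ioc_of_le hle]
    refine Integrable.sub ?_ ?_
    · exact hinteg (xe ε) (perturb u τ v ε) (τ - ε) τ hle hsubτ hzc (hpae ε _ hIocτ)
        (fun s hs => hpb ε s (Set.Ioc_subset_Icc_self.trans hsubτ hs))
    · exact hinteg x u (τ - ε) τ hle hsubτ hxc (huae' _ hIocτ)
        (fun s hs => hub s (Set.Ioc_subset_Icc_self.trans hsubτ hs))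
  set Bd : ℝ := K₁ * (Cb * ε + η') + K₁ * (η' + η') with hBddef
  have hptw : ∀ t ∈ Set.Ioc (τ - ε) τ, ‖g t - L‖ ≤ Bd := by
    intro t ht
    have ht1 : t ∈ Set.Icc (0:ℝ) 1 := Set.Ioc_subset_Icc_self.trans hsubτ ht
    have htτ : t ∈ Set.Icc (0:ℝ) τ := ⟨le_trans hτε0 ht.1.le, ht.2⟩
    have hpt : perturb u τ v ε t = v := by simp [perturb, ht.1, ht.2]
    have hdist : dist t τ < θ₁ ∧ dist t τ < θ₂ := by
      rw [Real.dist_eq, abs_of_nonpos (by linarith [ht.2])]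
      constructor <;> [linarith [ht.1]; linarith [ht.1]]
    have hx1 : ‖x t - x τ‖ < η' := by
      have := hθ₁ ht1 hdist.1
      rwa [dist_eq_norm] at this
    have hu1 : ‖u t - u τ‖ < η' := by
      have := hθ₂ (Set.mem_Iic.2 ht.2) hdist.2
      rwa [dist_eq_norm] at this
    have hkey : ‖xe ε t - x t‖ ≤ Cb * ε := key ε hε hετ t htτ
    have hA : ‖f (xe ε t) v - f (x τ) v‖ ≤ K₁ * (Cb * ε + η') := by
      have hl := hLip (xe ε t) (x τ) v v hv hv
      have h5 : ‖xe ε t - x τ‖ ≤ Cb * ε + η' := by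
        calc ‖xe ε t - x τ‖ ≤ ‖xe ε t - x t‖ + ‖x t - x τ‖ := norm_sub_le_norm_sub_add_norm_sub _ _ _
          _ ≤ Cb * ε + η' := by linarith
      calc ‖f (xe ε t) v - f (x τ) v‖ ≤ K₁ * (‖xe ε t - x τ‖ + ‖v - v‖) := hl
        _ = K₁ * ‖xe ε t - x τ‖ := by simp
        _ ≤ K₁ * (Cb * ε + η') := by nlinarith
    have hB : ‖f (x t) (u t) - f (x τ) (u τ)‖ ≤ K₁ * (η' + η') := by
      have hl := hLip (x t) (x τ) (u t) (u τ) (hub t ht1) (hub τ hxτ)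
      calc ‖f (x t) (u t) - f (x τ) (u τ)‖ ≤ K₁ * (‖x t - x τ‖ + ‖u t - u τ‖) := hl
        _ ≤ K₁ * (η' + η') := by nlinarith
    have hsplit : g t - L = (f (xe ε t) v - f (x τ) v) - (f (x t) (u t) - f (x τ) (u τ)) := by
      simp only [hgdef, hLdef, hpt]
      abel
    rw [hsplit]
    calc ‖(f (xe ε t) v - f (x τ) v) - (f (x t) (u t) - f (x τ) (u τ))‖
        ≤ ‖f (xe ε t) v - f (x τ) v‖ + ‖f (x t) (u t) - f (x τ) (u τ)‖ := norm_sub_le _ _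
      _ ≤ Bd := by rw [hBddef]; linarith
  have hrw : ε⁻¹ • (∫ t in (τ - ε)..τ, g t) - L
      = ε⁻¹ • ∫ t in (τ - ε)..τ, (g t - L) := by
    rw [intervalIntegral.integral_sub hgint intervalIntegrable_const]
    rw [intervalIntegral.integral_const]
    have h6 : τ - (τ - ε) = ε := by ring
    rw [h6, smul_sub, smul_smul, inv_mul_cancel₀ (ne_of_gt hε), one_smul]
  have hbound : ‖ε⁻¹ • (∫ t in (τ - ε)..τ, g t) - L‖ ≤ Bd := by
    rw [hrw, norm_smul, norm_inv, Real.norm_eq_abs, abs_of_pos hε]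
    have h7 : ‖∫ t in (τ - ε)..τ, (g t - L)‖ ≤ Bd * |τ - (τ - ε)| := by
      apply intervalIntegral.norm_integral_le_of_norm_le_const
      intro t ht
      rw [Set.uIoc_of_le hle] at ht
      exact hptw t ht
    have h8 : |τ - (τ - ε)| = ε := by rw [abs_of_pos (by linarith)]; ring
    rw [h8] at h7
    calc ε⁻¹ * ‖∫ t in (τ - ε)..τ, (g t - L)‖ ≤ ε⁻¹ * (Bd * ε) := by
          apply mul_le_mul_of_nonneg_left h7 (by positivity)
      _ = Bd := by field_simp
  rw [dist_eq_norm]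
  refine lt_of_le_of_lt hbound ?_
  rw [hBddef, hη'def]
  have hεb : K₁ * Cb * ε < η / 8 := by
    have h9 : K₁ * Cb * ε ≤ (K₁ * Cb + 1) * ε := by nlinarith
    have h10 : (K₁ * Cb + 1) * ε < (K₁ * Cb + 1) * δ₃ := by
      apply mul_lt_mul_of_pos_left hεδ₃ (by positivity)
    have h11 : (K₁ * Cb + 1) * δ₃ = η / 8 := by
      rw [hδ₃def]; field_simp
    linarith
  have h12 : K₁ * (η / (8 * K₁)) = η / 8 := by field_simp
  nlinarith [hη, hK0]
end
end

section
/- Let u ∈ U, τ ∈ (0,1), v ∈ B(0,ρ_max), and let u^ε be the perturbed control equal to v on (τ−ε, τ] and to u elsewhere. Let x₁ and x₁^ε be the solutions on [0,1] of ẋ = f(x,u) and ẋ = f(x,u^ε) starting at x₀. Then the right derivative Ψ₁(τ) := lim_{ε→0⁺} (x₁^ε(τ) − x₁(τ))/ε exists and equals f(x₁(τ), v) − f(x₁(τ), u(τ)). -/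
set_option maxHeartbeats 1000000


open Set MeasureTheory Filter Topology

noncomputable section

open scoped Classical

private lemma gronwall_integral_aux {E : Type*} [NormedAddCommGroup E] [NormedSpace ℝ E]
    {g : ℝ → E} {a b K B : ℝ} (hab : a ≤ b) (hK : 0 < K) (hB : 0 ≤ B)
    (hg : ContinuousOn g (Set.Icc a b))
    (hbound : ∀ t ∈ Set.Icc a b, ‖g t‖ ≤ K * (∫ s in a..t, ‖g s‖) + B) :
    ∀ t ∈ Set.Icc a b, ‖g t‖ ≤ B * Real.exp (K * (b - a)) := by
  have hcc : Continuous (fun s : ℝ => max a (min s b)) :=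
    continuous_const.max (continuous_id.min continuous_const)
  have hcmem : ∀ s : ℝ, max a (min s b) ∈ Set.Icc a b := fun s =>
    ⟨le_max_left _ _, max_le hab (min_le_right _ _)⟩
  have hceq : ∀ s ∈ Set.Icc a b, max a (min s b) = s := fun s hs => by
    rw [min_eq_left hs.2, max_eq_right hs.1]
  have hφc : Continuous (fun s => ‖g (max a (min s b))‖) :=
    (hg.comp_continuous hcc hcmem).norm
  set ψ := fun t : ℝ => ∫ s in a..t, ‖g (max a (min s b))‖ with hψ
  have hψd : ∀ t : ℝ, HasDerivAt ψ (‖g (max a (min t b))‖) t := fun t =>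
    (hφc.integral_hasStrictDerivAt a t).hasDerivAt
  have hψeq : ∀ t ∈ Set.Icc a b, ψ t = ∫ s in a..t, ‖g s‖ := by
    intro t ht
    refine intervalIntegral.integral_congr fun s hs => ?_
    rw [Set.uIcc_of_le ht.1] at hs
    rw [hceq s ⟨hs.1, hs.2.trans ht.2⟩]
  have hgr := norm_le_gronwallBound_of_norm_deriv_right_le (f := ψ)
    (f' := fun t => ‖g (max a (min t b))‖) (δ := 0) (K := K) (ε := B) (a := a) (b := b)
    (fun t _ => (hψd t).continuousAt.continuousWithinAt)
    (fun t _ => (hψd t).hasDerivWithinAt)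
    (by simp [hψ])
    ?_
  · intro t ht
    have h1 := hbound t ht
    have h2 := hgr t ht
    rw [gronwallBound_of_K_ne_0 hK.ne'] at h2
    simp only [Real.norm_eq_abs] at h2
    have h3 : ψ t = ∫ s in a..t, ‖g s‖ := hψeq t ht
    have hexp : Real.exp (K * (t - a)) ≤ Real.exp (K * (b - a)) :=
      Real.exp_le_exp.2 (by nlinarith [ht.1, ht.2])
    have h5 : K * (∫ s in a..t, ‖g s‖) ≤ K * |ψ t| := by
      rw [← h3]; exact mul_le_mul_of_nonneg_left (le_abs_self _) hK.le
    have h6 : K * |ψ t| ≤ K * (0 * Real.exp (K * (t - a)) + B / K * (Real.exp (K * (t - a)) - 1)) :=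
      mul_le_mul_of_nonneg_left h2 hK.le
    have h7 : K * (0 * Real.exp (K * (t - a)) + B / K * (Real.exp (K * (t - a)) - 1)) + B
        = B * Real.exp (K * (t - a)) := by field_simp; ring
    nlinarith [Real.exp_pos (K * (t - a))]
  · intro t ht
    have h1 := hbound t ⟨ht.1, ht.2.le⟩
    have h3 : ψ t = ∫ s in a..t, ‖g s‖ := hψeq t ⟨ht.1, ht.2.le⟩
    rw [hceq t ⟨ht.1, ht.2.le⟩]
    rw [norm_norm]
    calc ‖g t‖ ≤ K * (∫ s in a..t, ‖g s‖) + B := h1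
      _ ≤ K * ‖ψ t‖ + B := by
          rw [← h3, Real.norm_eq_abs]
          exact add_le_add_left (mul_le_mul_of_nonneg_left (le_abs_self _) hK.le) _

/-- Lemma 13: the right derivative
`Ψ₁(τ) = lim_{ε→0⁺} (x₁^ε(τ) − x₁(τ))/ε` exists and equals
`f(x₁(τ), v) − f(x₁(τ), u(τ))`. -/
theorem state_variation_at_perturbation_time {nx m : ℕ} (T : ℕ) (hT : 1 ≤ T)
    (ρmax K₁ : ℝ) (hK₁ : 1 ≤ K₁)
    (f : EucSp nx → EucSp m → EucSp nx)
    (hf : ContDiff ℝ 1 fun p : EucSp nx × EucSp m => f p.1 p.2)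
    (hLip : ∀ (x' x'' : EucSp nx) (u' u'' : EucSp m), ‖u'‖ ≤ ρmax → ‖u''‖ ≤ ρmax →
      ‖f x' u' - f x'' u''‖ ≤ K₁ * (‖x' - x''‖ + ‖u' - u''‖))
    (u : ℝ → EucSp m) (hu : AdmissibleCtrl (T : ℝ) ρmax u)
    (τ : ℝ) (hτ : τ ∈ Set.Ioo (0 : ℝ) 1) (v : EucSp m) (hv : ‖v‖ ≤ ρmax)
    (huτ : ContinuousWithinAt u (Set.Iic τ) τ)
    (x₀ : EucSp nx) (x : ℝ → EucSp nx) (xe : ℝ → ℝ → EucSp nx)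
    (hxnom : x 0 = x₀ ∧ IsSolOn f u 0 1 x)
    (hxe : ∀ ε ∈ Set.Icc (0 : ℝ) τ,
      xe ε 0 = x₀ ∧ IsSolOn f (perturb u τ v ε) 0 1 (xe ε)) :
    Tendsto (fun ε : ℝ => ε⁻¹ • (xe ε τ - x τ))
      (𝓝[>] 0) (𝓝 (f (x τ) v - f (x τ) (u τ))) := by
  have hx0 := hxnom.1
  have hxc := hxnom.2.1
  have hxint := hxnom.2.2
  obtain ⟨hτ0, hτ1⟩ := hτ
  have hK0 : (0:ℝ) < K₁ := lt_of_lt_of_le one_pos hK₁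
  have hT1 : (1:ℝ) ≤ (T:ℝ) := by exact_mod_cast hT
  have hτT : τ ∈ Set.Icc (0:ℝ) (T:ℝ) := ⟨hτ0.le, hτ1.le.trans hT1⟩
  have hIcc1T : Set.Icc (0:ℝ) 1 ⊆ Set.Icc (0:ℝ) (T:ℝ) := Set.Icc_subset_Icc le_rfl hT1
  have hρ0 : 0 ≤ ρmax := (norm_nonneg _).trans (hu.2 τ hτT)
  have huρ : ∀ s ∈ Set.Icc (0:ℝ) 1, ‖u s‖ ≤ ρmax := fun s hs => hu.2 s (hIcc1T hs)
  have huτρ : ‖u τ‖ ≤ ρmax := hu.2 τ hτT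
  have hτ01 : τ ∈ Set.Icc (0:ℝ) 1 := ⟨hτ0.le, hτ1.le⟩
  -- a.e.-measurability of the nominal control
  have hmu : AEStronglyMeasurable u (volume.restrict (Set.Icc (0:ℝ) (T:ℝ))) := by
    obtain ⟨D, hD⟩ := hu.1
    have hmeasD : MeasurableSet (Set.Icc (0:ℝ) (T:ℝ) \ (D : Set ℝ)) :=
      measurableSet_Icc.diff D.finite_toSet.measurableSet
    have hcont : ContinuousOn u (Set.Icc (0:ℝ) (T:ℝ) \ (D : Set ℝ)) := fun t ht =>
      (hD t ht.1 ht.2).mono Set.diff_subset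
    have h1 : AEStronglyMeasurable u (volume.restrict (Set.Icc 0 (T:ℝ) \ (D : Set ℝ))) :=
      hcont.aestronglyMeasurable hmeasD
    have h2 : (Set.Icc (0:ℝ) (T:ℝ) \ (D : Set ℝ)) =ᵐ[volume] Set.Icc (0:ℝ) (T:ℝ) := by
      refine MeasureTheory.diff_ae_eq_self.2 ?_
      exact measure_mono_null Set.inter_subset_right (D.finite_toSet.countable.measure_zero _)
    rw [← Measure.restrict_congr_set h2]; exact h1
  -- integrability of the right-hand sides
  have hInt : ∀ z : ℝ → EucSp nx, ContinuousOn z (Set.Icc 0 1) →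
      ∀ w : ℝ → EucSp m, AEStronglyMeasurable w (volume.restrict (Set.Icc (0:ℝ) (T:ℝ))) →
      (∀ s ∈ Set.Icc (0:ℝ) 1, ‖w s‖ ≤ ρmax) →
      ∀ c d : ℝ, 0 ≤ c → c ≤ d → d ≤ 1 →
      IntervalIntegrable (fun s => f (z s) (w s)) volume c d := by
    intro z hzc w hwm hwb c d hc hcd hd1
    obtain ⟨Mz, hMz⟩ := isCompact_Icc.exists_bound_of_continuousOn hzc
    have hsub1 : Set.Ioc c d ⊆ Set.Icc (0:ℝ) 1 :=
      Set.Ioc_subset_Icc_self.trans (Set.Icc_subset_Icc hc hd1)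
    have hsubT : Set.Ioc c d ⊆ Set.Icc (0:ℝ) (T:ℝ) := hsub1.trans hIcc1T
    rw [intervalIntegrable_iff_integrableOn_Ioc_of_le hcd]
    have hzm : AEStronglyMeasurable z (volume.restrict (Set.Ioc c d)) :=
      (hzc.mono hsub1).aestronglyMeasurable measurableSet_Ioc
    have hwm' : AEStronglyMeasurable w (volume.restrict (Set.Ioc c d)) :=
      hwm.mono_measure (Measure.restrict_mono hsubT le_rfl)
    have hm : AEStronglyMeasurable (fun s => f (z s) (w s)) (volume.restrict (Set.Ioc c d)) :=
      hf.continuous.comp_aestronglyMeasurable (hzm.prodMk hwm')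
    refine Integrable.mono'
      (integrable_const (‖f (x τ) (u τ)‖ + K₁ * ((Mz + ‖x τ‖) + 2 * ρmax))) hm ?_
    filter_upwards [ae_restrict_mem measurableSet_Ioc] with s hs
    have h1 := hLip (z s) (x τ) (w s) (u τ) (hwb s (hsub1 hs)) huτρ
    have h2 : ‖z s - x τ‖ ≤ Mz + ‖x τ‖ :=
      (norm_sub_le _ _).trans (add_le_add_left (hMz s (hsub1 hs)) _)
    have h3 : ‖w s - u τ‖ ≤ 2 * ρmax :=
      (norm_sub_le _ _).trans (by linarith [hwb s (hsub1 hs), huτρ])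
    have h4 := norm_sub_norm_le (f (z s) (w s)) (f (x τ) (u τ))
    have h5 : K₁ * (‖z s - x τ‖ + ‖w s - u τ‖) ≤ K₁ * ((Mz + ‖x τ‖) + 2 * ρmax) :=
      mul_le_mul_of_nonneg_left (add_le_add h2 h3) hK0.le
    linarith
  set Δ : EucSp nx := f (x τ) v - f (x τ) (u τ) with hΔdef
  set C : ℝ := 2 * K₁ * ρmax * Real.exp K₁ with hCdef
  have hC0 : 0 ≤ C := by rw [hCdef]; positivity
  rw [Metric.tendsto_nhdsWithin_nhds]
  intro η hη
  set η' : ℝ := η / (8 * K₁) with hη'def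
  have hη'0 : 0 < η' := by rw [hη'def]; positivity
  obtain ⟨d₁, hd₁0, hd₁⟩ := Metric.continuousWithinAt_iff.1 (hxc τ hτ01) η' hη'0
  obtain ⟨d₂, hd₂0, hd₂⟩ := Metric.continuousWithinAt_iff.1 huτ η' hη'0
  refine ⟨min (min d₁ d₂) (min τ (η / (2 * (K₁ * C + 1)))), by positivity, ?_⟩
  intro ε hε hdist
  replace hε : (0:ℝ) < ε := hε
  rw [Real.dist_eq, sub_zero, abs_of_pos hε] at hdist
  have hεd₁ : ε < d₁ := hdist.trans_le ((min_le_left _ _).trans (min_le_left _ _))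
  have hεd₂ : ε < d₂ := hdist.trans_le ((min_le_left _ _).trans (min_le_right _ _))
  have hετ : ε < τ := hdist.trans_le ((min_le_right _ _).trans (min_le_left _ _))
  have hεη : ε < η / (2 * (K₁ * C + 1)) :=
    hdist.trans_le ((min_le_right _ _).trans (min_le_right _ _))
  have hε1 : ε ≤ 1 := (hετ.trans hτ1).le
  set a : ℝ := τ - ε with hadef
  have ha0 : 0 < a := by rw [hadef]; linarith
  have haτ : a < τ := by rw [hadef]; linarith
  have ha1 : a ≤ 1 := by rw [hadef]; linarith
  have hxeP := hxe ε ⟨hε.le, hετ.le⟩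
  have hxe0 := hxeP.1
  have hxec := hxeP.2.1
  have hxeint := hxeP.2.2
  set ue : ℝ → EucSp m := perturb u τ v ε with huedef
  have hue_le : ∀ s, s ≤ a → ue s = u s := by
    intro s hs
    rw [hadef] at hs
    simp only [huedef, perturb]
    rw [if_neg]
    rintro ⟨h1, -⟩
    linarith
  have hue_Ioc : ∀ s ∈ Set.Ioc a τ, ue s = v := by
    intro s hs
    obtain ⟨hs1, hs2⟩ := hs
    rw [hadef] at hs1
    simp only [huedef, perturb]
    rw [if_pos ⟨hs1, hs2⟩]
  have hueρ : ∀ s ∈ Set.Icc (0:ℝ) 1, ‖ue s‖ ≤ ρmax := by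
    intro s hs
    simp only [huedef, perturb]
    split_ifs with h
    · exact hv
    · exact huρ s hs
  have huem : AEStronglyMeasurable ue (volume.restrict (Set.Icc (0:ℝ) (T:ℝ))) := by
    have heq : ue = fun t => u t + (Set.Ioc a τ).indicator (fun t => v - u t) t := by
      funext t
      by_cases h : t ∈ Set.Ioc a τ
      · rw [Set.indicator_of_mem h, hue_Ioc t h]
        abel
      · rw [Set.indicator_of_notMem h, add_zero]
        simp only [huedef, perturb]
        rw [if_neg]
        intro hc
        exact h (Set.mem_Ioc.mpr ⟨by rw [hadef]; exact hc.1, hc.2⟩)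
    rw [heq]
    exact hmu.add ((aestronglyMeasurable_const.sub hmu).indicator measurableSet_Ioc)
  set F : ℝ → EucSp nx := fun s => f (x s) (u s) with hFdef
  set Fe : ℝ → EucSp nx := fun s => f (xe ε s) (ue s) with hFedef
  have hIF : ∀ c d : ℝ, 0 ≤ c → c ≤ d → d ≤ 1 → IntervalIntegrable F volume c d :=
    hInt x hxc u hmu huρ
  have hIFe : ∀ c d : ℝ, 0 ≤ c → c ≤ d → d ≤ 1 → IntervalIntegrable Fe volume c d :=
    hInt (xe ε) hxec ue huem hueρ
  set δf : ℝ → EucSp nx := fun t => xe ε t - x t with hδfdef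
  have hδc : ContinuousOn δf (Set.Icc 0 1) := hxec.sub hxc
  have hδeq : ∀ t ∈ Set.Icc (0:ℝ) 1, δf t = ∫ s in (0:ℝ)..t, (Fe s - F s) := by
    intro t ht
    have h1 := hxeint t ht
    have h2 := hxint t ht
    have h3 : δf t = (∫ s in (0:ℝ)..t, Fe s) - ∫ s in (0:ℝ)..t, F s := by
      simp only [hδfdef]
      rw [h1, h2, hxe0, hx0]
      abel
    rw [h3, ← intervalIntegral.integral_sub (hIFe 0 t le_rfl ht.1 ht.2)
      (hIF 0 t le_rfl ht.1 ht.2)]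
  -- the nominal and perturbed solutions agree on [0, a]
  have hδ0 : ∀ t ∈ Set.Icc (0:ℝ) a, δf t = 0 := by
    have hsub : Set.Icc (0:ℝ) a ⊆ Set.Icc (0:ℝ) 1 := Set.Icc_subset_Icc le_rfl ha1
    have hbound1 : ∀ t ∈ Set.Icc (0:ℝ) a,
        ‖δf t‖ ≤ K₁ * (∫ s in (0:ℝ)..t, ‖δf s‖) + 0 := by
      intro t ht
      rw [hδeq t (hsub ht)]
      have hptw : ∀ s ∈ Set.Icc (0:ℝ) t, ‖Fe s - F s‖ ≤ K₁ * ‖δf s‖ := by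
        intro s hs
        have hsa : s ≤ a := hs.2.trans ht.2
        have hs1 : s ∈ Set.Icc (0:ℝ) 1 := ⟨hs.1, hsa.trans ha1⟩
        have h1 := hLip (xe ε s) (x s) (ue s) (u s) (hueρ s hs1) (huρ s hs1)
        rw [hue_le s hsa] at h1
        simp only [sub_self, norm_zero, add_zero] at h1
        simp only [hFedef, hFdef, hδfdef, hue_le s hsa]
        exact h1
      calc ‖∫ s in (0:ℝ)..t, (Fe s - F s)‖
          ≤ |∫ s in (0:ℝ)..t, ‖Fe s - F s‖| :=
            intervalIntegral.norm_integral_le_abs_integral_norm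
        _ = ∫ s in (0:ℝ)..t, ‖Fe s - F s‖ :=
            abs_of_nonneg (intervalIntegral.integral_nonneg ht.1 fun s _ => norm_nonneg _)
        _ ≤ ∫ s in (0:ℝ)..t, K₁ * ‖δf s‖ := by
            refine intervalIntegral.integral_mono_on ht.1
              (((hIFe 0 t le_rfl ht.1 (ht.2.trans ha1)).sub
                (hIF 0 t le_rfl ht.1 (ht.2.trans ha1))).norm) ?_ hptw
            have hcont : ContinuousOn (fun s => K₁ * ‖δf s‖) (Set.uIcc (0:ℝ) t) := by
              rw [Set.uIcc_of_le ht.1]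
              exact continuousOn_const.mul
                ((hδc.mono (Set.Icc_subset_Icc le_rfl (ht.2.trans ha1))).norm)
            exact hcont.intervalIntegrable
        _ = K₁ * ∫ s in (0:ℝ)..t, ‖δf s‖ := intervalIntegral.integral_const_mul _ _
        _ ≤ K₁ * (∫ s in (0:ℝ)..t, ‖δf s‖) + 0 := by linarith
    have key := gronwall_integral_aux ha0.le hK0 le_rfl (hδc.mono hsub) hbound1
    intro t ht
    have h := key t ht
    rw [zero_mul] at h
    exact norm_le_zero_iff.1 h
  have hδa : δf a = 0 := hδ0 a ⟨ha0.le, le_rfl⟩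
  -- integral representation on [a, τ]
  have hδeq2 : ∀ t ∈ Set.Icc a τ, δf t = ∫ s in a..t, (Fe s - F s) := by
    intro t ht
    have ht1 : t ∈ Set.Icc (0:ℝ) 1 := ⟨ha0.le.trans ht.1, ht.2.trans hτ1.le⟩
    have e1 := hδeq t ht1
    have e2 := hδeq a ⟨ha0.le, ha1⟩
    have hadd := intervalIntegral.integral_add_adjacent_intervals
      (f := fun s => Fe s - F s) (μ := volume) (a := 0) (b := a) (c := t)
      ((hIFe 0 a le_rfl ha0.le ha1).sub (hIF 0 a le_rfl ha0.le ha1))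
      ((hIFe a t ha0.le ht.1 ht1.2).sub (hIF a t ha0.le ht.1 ht1.2))
    have e3 : (∫ s in (0:ℝ)..a, (Fe s - F s)) = 0 := by rw [← e2, hδa]
    rw [e1, ← hadd, e3, zero_add]
  -- Grönwall bound on [a, τ]
  have hδbd : ∀ s ∈ Set.Icc a τ, ‖δf s‖ ≤ C * ε := by
    have hsub : Set.Icc a τ ⊆ Set.Icc (0:ℝ) 1 := Set.Icc_subset_Icc ha0.le hτ1.le
    have hbound2 : ∀ t ∈ Set.Icc a τ,
        ‖δf t‖ ≤ K₁ * (∫ s in a..t, ‖δf s‖) + K₁ * (2 * ρmax) * ε := by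
      intro t ht
      rw [hδeq2 t ht]
      have ht1 : t ∈ Set.Icc (0:ℝ) 1 := hsub ht
      have hptw : ∀ s ∈ Set.Icc a t, ‖Fe s - F s‖ ≤ K₁ * ‖δf s‖ + K₁ * (2 * ρmax) := by
        intro s hs
        have hs1 : s ∈ Set.Icc (0:ℝ) 1 := ⟨ha0.le.trans hs.1, hs.2.trans ht1.2⟩
        have h1 := hLip (xe ε s) (x s) (ue s) (u s) (hueρ s hs1) (huρ s hs1)
        have h2 : ‖ue s - u s‖ ≤ 2 * ρmax :=
          (norm_sub_le _ _).trans (by linarith [hueρ s hs1, huρ s hs1])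
        have h3 : K₁ * (‖xe ε s - x s‖ + ‖ue s - u s‖)
            ≤ K₁ * ‖xe ε s - x s‖ + K₁ * (2 * ρmax) := by nlinarith
        simp only [hFedef, hFdef, hδfdef]
        exact h1.trans h3
      calc ‖∫ s in a..t, (Fe s - F s)‖
          ≤ |∫ s in a..t, ‖Fe s - F s‖| :=
            intervalIntegral.norm_integral_le_abs_integral_norm
        _ = ∫ s in a..t, ‖Fe s - F s‖ :=
            abs_of_nonneg (intervalIntegral.integral_nonneg ht.1 fun s _ => norm_nonneg _)
        _ ≤ ∫ s in a..t, (K₁ * ‖δf s‖ + K₁ * (2 * ρmax)) := by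
            refine intervalIntegral.integral_mono_on ht.1
              (((hIFe a t ha0.le ht.1 ht1.2).sub (hIF a t ha0.le ht.1 ht1.2)).norm) ?_ hptw
            have hcont : ContinuousOn (fun s => K₁ * ‖δf s‖ + K₁ * (2 * ρmax))
                (Set.uIcc a t) := by
              rw [Set.uIcc_of_le ht.1]
              exact (continuousOn_const.mul
                ((hδc.mono (Set.Icc_subset_Icc ha0.le ht1.2)).norm)).add continuousOn_const
            exact hcont.intervalIntegrable
        _ = K₁ * (∫ s in a..t, ‖δf s‖) + K₁ * (2 * ρmax) * (t - a) := by
            rw [intervalIntegral.integral_add ?h1 intervalIntegrable_const]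
            · rw [intervalIntegral.integral_const_mul, intervalIntegral.integral_const,
                smul_eq_mul]
              ring
            case h1 =>
              have hcont : ContinuousOn (fun s => K₁ * ‖δf s‖) (Set.uIcc a t) := by
                rw [Set.uIcc_of_le ht.1]
                exact continuousOn_const.mul
                  ((hδc.mono (Set.Icc_subset_Icc ha0.le ht1.2)).norm)
              exact hcont.intervalIntegrable
        _ ≤ K₁ * (∫ s in a..t, ‖δf s‖) + K₁ * (2 * ρmax) * ε := by
            have h6 : t - a ≤ ε := by rw [hadef]; linarith [ht.2]
            have h7 := mul_le_mul_of_nonneg_left h6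
              (show (0:ℝ) ≤ K₁ * (2 * ρmax) by positivity)
            linarith
    have key := gronwall_integral_aux haτ.le hK0 (by positivity) (hδc.mono hsub) hbound2
    intro s hs
    have h1 := key s hs
    have h2 : τ - a = ε := by rw [hadef]; ring
    rw [h2] at h1
    have h3 : Real.exp (K₁ * ε) ≤ Real.exp K₁ := Real.exp_le_exp.2 (by nlinarith)
    have h4 : K₁ * (2 * ρmax) * ε * Real.exp (K₁ * ε)
        ≤ K₁ * (2 * ρmax) * ε * Real.exp K₁ :=
      mul_le_mul_of_nonneg_left h3 (by positivity)
    have h5 : K₁ * (2 * ρmax) * ε * Real.exp K₁ = C * ε := by rw [hCdef]; ring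
    linarith
  -- pointwise estimate for the averaged integrand
  have hfinal : ∀ s ∈ Set.Ioc a τ, ‖Fe s - F s - Δ‖ ≤ K₁ * (C * ε) + 3 * (K₁ * η') := by
    intro s hs
    have hs1 : s ∈ Set.Icc (0:ℝ) 1 := ⟨ha0.le.trans hs.1.le, hs.2.trans hτ1.le⟩
    have hsd : dist s τ < min d₁ d₂ := by
      rw [Real.dist_eq, abs_of_nonpos (by linarith [hs.2] : s - τ ≤ 0)]
      have h7 : a < s := hs.1
      rw [hadef] at h7
      have h8 := lt_min hεd₁ hεd₂
      linarith
    have hxs : ‖x s - x τ‖ < η' := by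
      have := hd₁ hs1 (hsd.trans_le (min_le_left _ _))
      rwa [dist_eq_norm] at this
    have hus : ‖u s - u τ‖ < η' := by
      have := hd₂ (Set.mem_Iic.2 hs.2) (hsd.trans_le (min_le_right _ _))
      rwa [dist_eq_norm] at this
    have hδs : ‖δf s‖ ≤ C * ε := hδbd s ⟨hs.1.le, hs.2⟩
    have hxes : ‖xe ε s - x τ‖ ≤ C * ε + η' := by
      have h8 : xe ε s - x τ = δf s + (x s - x τ) := by simp only [hδfdef]; abel
      rw [h8]
      exact (norm_add_le _ _).trans (by linarith)
    have hueqv : ue s = v := hue_Ioc s hs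
    have h5 := hLip (xe ε s) (x τ) v v hv hv
    have h6 := hLip (x s) (x τ) (u s) (u τ) (huρ s hs1) huτρ
    have h9 : Fe s - F s - Δ
        = (f (xe ε s) v - f (x τ) v) - (f (x s) (u s) - f (x τ) (u τ)) := by
      simp only [hFedef, hFdef, hΔdef, hueqv]
      abel
    rw [h9]
    calc ‖(f (xe ε s) v - f (x τ) v) - (f (x s) (u s) - f (x τ) (u τ))‖
        ≤ ‖f (xe ε s) v - f (x τ) v‖ + ‖f (x s) (u s) - f (x τ) (u τ)‖ := norm_sub_le _ _
      _ ≤ K₁ * (‖xe ε s - x τ‖ + ‖v - v‖) + K₁ * (‖x s - x τ‖ + ‖u s - u τ‖) :=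
          add_le_add h5 h6
      _ ≤ K₁ * (C * ε) + 3 * (K₁ * η') := by
          simp only [sub_self, norm_zero, add_zero]
          nlinarith
  -- assemble the final estimate
  have hδτ : δf τ = ∫ s in a..τ, (Fe s - F s) := hδeq2 τ ⟨haτ.le, le_rfl⟩
  have hτa : τ - a = ε := by rw [hadef]; ring
  have key3 : ε⁻¹ • (xe ε τ - x τ) - Δ = ε⁻¹ • ∫ s in a..τ, (Fe s - F s - Δ) := by
    rw [show xe ε τ - x τ = δf τ from rfl, hδτ,
      intervalIntegral.integral_sub
        ((hIFe a τ ha0.le haτ.le hτ1.le).sub (hIF a τ ha0.le haτ.le hτ1.le))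
        intervalIntegrable_const,
      intervalIntegral.integral_const, hτa, smul_sub, smul_smul,
      inv_mul_cancel₀ hε.ne', one_smul]
  rw [dist_eq_norm, key3, norm_smul, Real.norm_eq_abs, abs_of_pos (inv_pos.2 hε)]
  have hbig : ‖∫ s in a..τ, (Fe s - F s - Δ)‖ ≤ (K₁ * (C * ε) + 3 * (K₁ * η')) * |τ - a| := by
    refine intervalIntegral.norm_integral_le_of_norm_le_const ?_
    intro s hs
    rw [Set.uIoc_of_le haτ.le] at hs
    exact hfinal s hs
  rw [hτa, abs_of_pos hε] at hbig
  calc ε⁻¹ * ‖∫ s in a..τ, (Fe s - F s - Δ)‖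
      ≤ ε⁻¹ * ((K₁ * (C * ε) + 3 * (K₁ * η')) * ε) :=
        mul_le_mul_of_nonneg_left hbig (by positivity)
    _ = K₁ * (C * ε) + 3 * (K₁ * η') := by field_simp
    _ < η := by
        have hKC : (0:ℝ) ≤ K₁ * C := by positivity
        have h1 : ε * (2 * (K₁ * C + 1)) < η := (lt_div_iff₀ (by positivity)).1 hεη
        have h2 : K₁ * η' = η / 8 := by rw [hη'def]; field_simp
        rw [h2]
        nlinarith
end
end
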